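/- arXiv:1109.3636 — 9 statements merged into one kernel-verified Lean document; each statement's English description precedes it below -/
import Mathlib

section
/- Let d ≥ 1 and let x = (x_i^k) for 1 ≤ k ≤ d, 1 ≤ i ≤ d−k+1 be real numbers. Let M(x) be the (d+1)×(d+1) real matrix with M(x)_{i,i} = 1 for all i, M(x)_{i,i+k} = x_i^k for 1 ≤ k ≤ d and 1 ≤ i ≤ d−k+1, and all other entries 0. Then for every n ∈ ℕ, every 1 ≤ k ≤ d and 1 ≤ i ≤ d−k+1, the (i, i+k) entry of M(x)^n equals Σ_{ℓ=1}^k C(n,ℓ)·P_ℓ(x;i,k), where P_ℓ(x;i,k) = Σ x_i^{s₁} x_{i+s₁}^{s₂} x_{i+s₁+s₂}^{s₃} ⋯ x_{i+s₁+⋯+s_{ℓ−1}}^{s_ℓ}, the sum being over all (s₁,…,s_ℓ) ∈ {1,…,k}^ℓ with s₁+⋯+s_ℓ = k. -/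
/-- The upper-triangular unipotent matrix `M(x)` with `M(x)_{i,i} = 1`,
`M(x)_{i,i+k} = x_i^k` (here `x k i` denotes `x_i^k`), and all other entries `0`.
Rows/columns of the `(d+1)×(d+1)` matrix are 0-indexed, while the data `x` is 1-indexed. -/
def Mmat (d : ℕ) (x : ℕ → ℕ → ℝ) : Matrix (Fin (d + 1)) (Fin (d + 1)) ℝ :=
  fun i j =>
    if (i : ℕ) = (j : ℕ) then 1
    else if (i : ℕ) < (j : ℕ) then x ((j : ℕ) - (i : ℕ)) ((i : ℕ) + 1) else 0

/-- `P_ℓ(x; i, k) = Σ x_i^{s₁} x_{i+s₁}^{s₂} ⋯ x_{i+s₁+⋯+s_{ℓ−1}}^{s_ℓ}`, the sum over all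
`(s₁,…,s_ℓ) ∈ {1,…,k}^ℓ` with `s₁+⋯+s_ℓ = k`.  A tuple is encoded by `s : Fin ℓ → Fin k`,
the `t`-th entry being `(s t : ℕ) + 1 ∈ {1,…,k}`, and `x k i` denotes `x_i^k`. -/
def Pcoef (x : ℕ → ℕ → ℝ) (i k ℓ : ℕ) : ℝ :=
  ∑ s ∈ (Finset.univ : Finset (Fin ℓ → Fin k)).filter
      (fun s => (∑ t, ((s t : ℕ) + 1)) = k),
    ∏ t, x ((s t : ℕ) + 1)
      (i + ∑ t' ∈ Finset.univ.filter (fun t' => t' < t), ((s t' : ℕ) + 1))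

open Finset

def Pgen (x : ℕ → ℕ → ℝ) (i k ℓ K : ℕ) : ℝ :=
  ∑ s ∈ (Finset.univ : Finset (Fin ℓ → Fin K)).filter
      (fun s => (∑ t, ((s t : ℕ) + 1)) = k),
    ∏ t, x ((s t : ℕ) + 1)
      (i + ∑ t' ∈ Finset.univ.filter (fun t' => t' < t), ((s t' : ℕ) + 1))

lemma Pcoef_eq_Pgen (x : ℕ → ℕ → ℝ) (i k ℓ : ℕ) : Pcoef x i k ℓ = Pgen x i k ℓ k := rfl

lemma mem_bound {ℓ K k : ℕ} (s : Fin ℓ → Fin K) (hs : (∑ t, ((s t : ℕ) + 1)) = k)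
    (t : Fin ℓ) : (s t : ℕ) < k := by
  have : (s t : ℕ) + 1 ≤ ∑ t, ((s t : ℕ) + 1) :=
    Finset.single_le_sum (f := fun t => (s t : ℕ) + 1) (fun _ _ => Nat.zero_le _) (mem_univ t)
  omega

lemma Pgen_eq_Pcoef (x : ℕ → ℕ → ℝ) (i k ℓ K : ℕ) (h : k ≤ K) :
    Pgen x i k ℓ K = Pcoef x i k ℓ := by
  unfold Pgen Pcoef
  refine Finset.sum_bij'
    (fun s hs t => (⟨(s t : ℕ), mem_bound s (by simpa using hs) t⟩ : Fin k))
    (fun s _ t => Fin.castLE h (s t)) ?_ ?_ ?_ ?_ ?_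
  · intro s hs
    simp only [mem_filter, mem_univ, true_and] at hs ⊢
    simpa using hs
  · intro s hs
    simp only [mem_filter, mem_univ, true_and] at hs ⊢
    simpa using hs
  · intro s hs; funext t; rfl
  · intro s hs; funext t; rfl
  · intro s hs; rfl

lemma filter_lt_succ_sum {ℓ : ℕ} (g : Fin (ℓ+1) → ℕ) (u : Fin ℓ) :
    ∑ t' ∈ Finset.univ.filter (fun t' => t' < Fin.succ u), g t'
      = g 0 + ∑ u' ∈ Finset.univ.filter (fun u' => u' < u), g (Fin.succ u') := by
  rw [Finset.sum_filter, Finset.sum_filter, Fin.sum_univ_succ]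
  simp [Fin.succ_pos, Fin.succ_lt_succ_iff]

lemma sum_cons_split {k ℓ : ℕ} (f : (Fin (ℓ+1) → Fin k) → ℝ) :
    ∑ s : Fin (ℓ+1) → Fin k, f s = ∑ v : Fin k, ∑ s' : Fin ℓ → Fin k, f (Fin.cons v s') := by
  rw [← Fintype.sum_equiv (Fin.consEquiv fun _ => Fin k) (fun p => f (Fin.cons p.1 p.2)) f (fun p => rfl)]
  exact Fintype.sum_prod_type _

lemma Pcoef_succ (x : ℕ → ℕ → ℝ) (i k ℓ : ℕ) :
    Pcoef x i k (ℓ+1) = ∑ m ∈ Finset.Icc 1 k, x m i * Pcoef x (i+m) (k-m) ℓ := by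
  -- rewrite RHS as a sum over Fin k
  have hrhs : ∑ m ∈ Finset.Icc 1 k, x m i * Pcoef x (i+m) (k-m) ℓ
      = ∑ v : Fin k, x ((v:ℕ)+1) i * Pgen x (i+((v:ℕ)+1)) (k-((v:ℕ)+1)) ℓ k := by
    refine Finset.sum_bij' (fun m hm => (⟨m-1, by simp [Finset.mem_Icc] at hm; omega⟩ : Fin k))
      (fun v _ => (v:ℕ)+1) ?_ ?_ ?_ ?_ ?_
    · intro v _; exact Finset.mem_univ _
    · intro v _; simp [Finset.mem_Icc]
    · intro m hm; simp only [Finset.mem_Icc] at hm; show m - 1 + 1 = m; omega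
    · intro v _; simp
    · intro m hm
      simp only [Finset.mem_Icc] at hm
      have h1 : m - 1 + 1 = m := by omega
      rw [Pgen_eq_Pcoef _ _ _ _ _ (by omega)]
      simp [h1]
  rw [hrhs]
  rw [Pcoef_eq_Pgen]
  unfold Pgen
  rw [Finset.sum_filter]
  rw [sum_cons_split]
  refine Finset.sum_congr rfl ?_
  intro v _
  have hv : (v:ℕ) < k := v.isLt
  rw [Finset.sum_filter, Finset.mul_sum]
  refine Finset.sum_congr rfl ?_
  intro s' _
  simp only [Fin.sum_univ_succ, Fin.cons_zero, Fin.cons_succ]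
  have hv1 : ((v:ℕ) + 1 + ∑ u, ((s' u : ℕ) + 1) = k) = (∑ u, ((s' u : ℕ) + 1) = k - ((v:ℕ)+1)) :=
    propext (by omega)
  simp only [hv1]
  by_cases hc : (∑ u, ((s' u : ℕ) + 1)) = k - ((v:ℕ)+1)
  · rw [if_pos hc, if_pos hc, Fin.prod_univ_succ]
    simp only [Fin.cons_zero, Fin.cons_succ]
    simp only [filter_lt_succ_sum]
    simp only [Fin.cons_zero, Fin.cons_succ]
    have h0 : (Finset.univ.filter (fun t' => t' < (0 : Fin (ℓ+1)))) = ∅ := by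
      simp [Finset.filter_eq_empty_iff]
    rw [h0]
    simp only [Finset.sum_empty, add_zero]
    congr 1
    refine Finset.prod_congr rfl ?_
    intro u _
    congr 1
    omega
  · rw [if_neg hc, if_neg hc, mul_zero]

def Nmat (d : ℕ) (x : ℕ → ℕ → ℝ) : Matrix (Fin (d + 1)) (Fin (d + 1)) ℝ :=
  fun i j => if (i : ℕ) < (j : ℕ) then x ((j : ℕ) - (i : ℕ)) ((i : ℕ) + 1) else 0

lemma Mmat_eq (d : ℕ) (x : ℕ → ℕ → ℝ) : Mmat d x = 1 + Nmat d x := by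
  funext a b
  simp only [Mmat, Nmat, Matrix.add_apply, Matrix.one_apply]
  by_cases h : (a : ℕ) = (b : ℕ)
  · have : a = b := Fin.ext h
    simp [this]
  · have : ¬ a = b := fun hh => h (congrArg Fin.val hh)
    simp [h, this]

lemma Pcoef_zero_right (x : ℕ → ℕ → ℝ) (i k : ℕ) : Pcoef x i k 0 = if k = 0 then 1 else 0 := by
  unfold Pcoef
  rcases Nat.eq_zero_or_pos k with h | h
  · subst h; simp
  · rw [if_neg (by omega), Finset.filter_false_of_mem (by intro s _; simp; omega)]
    simp

lemma Pcoef_zero_left (x : ℕ → ℕ → ℝ) (i ℓ : ℕ) (hl : 1 ≤ ℓ) : Pcoef x i 0 ℓ = 0 := by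
  obtain ⟨ℓ', rfl⟩ : ∃ ℓ', ℓ = ℓ' + 1 := ⟨ℓ - 1, by omega⟩
  rw [Pcoef_succ]
  simp

lemma Npow_apply (d : ℕ) (x : ℕ → ℕ → ℝ) (ℓ : ℕ) (a b : Fin (d + 1)) :
    (Nmat d x ^ ℓ) a b =
      if (a : ℕ) ≤ (b : ℕ) then Pcoef x ((a : ℕ) + 1) ((b : ℕ) - (a : ℕ)) ℓ else 0 := by
  induction ℓ generalizing a b with
  | zero =>
    rw [pow_zero, Matrix.one_apply]
    by_cases h : a = b
    · subst h
      simp [Pcoef, Nat.sub_self]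
    · have h' : (a : ℕ) ≠ (b : ℕ) := fun hh => h (Fin.ext hh)
      rw [if_neg h, Pcoef_zero_right]
      by_cases h2 : (a : ℕ) ≤ (b : ℕ)
      · rw [if_pos h2, if_neg (by omega)]
      · rw [if_neg h2]
  | succ ℓ ih =>
    rw [pow_succ', Matrix.mul_apply]
    simp only [ih, Nmat]
    by_cases hab : (a : ℕ) ≤ (b : ℕ)
    · rw [if_pos hab]
      by_cases heq : (a : ℕ) = (b : ℕ)
      · rw [← heq, Nat.sub_self, Pcoef_zero_left _ _ _ (by omega)]
        apply Finset.sum_eq_zero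
        intro c _
        rcases lt_or_ge (a : ℕ) (c : ℕ) with h1 | h1
        · rw [if_neg (show ¬ ((c : ℕ) ≤ (a : ℕ)) by omega), mul_zero]
        · rw [if_neg (show ¬ ((a : ℕ) < (c : ℕ)) by omega), zero_mul]
      · rw [Pcoef_succ]
        rw [← Finset.sum_filter_of_ne
          (p := fun c : Fin (d+1) => (a : ℕ) < (c : ℕ) ∧ (c : ℕ) ≤ (b : ℕ))
          (by
            intro c _ hne
            by_contra hcon
            rcases not_and_or.mp hcon with h1 | h1
            · exact hne (by rw [if_neg h1, zero_mul])
            · exact hne (by rw [if_neg h1, mul_zero]))]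
        refine Finset.sum_bij' (fun c _ => (c : ℕ) - (a : ℕ))
          (fun m hm => (⟨(a : ℕ) + m, by
            simp only [Finset.mem_Icc] at hm
            have := b.isLt
            omega⟩ : Fin (d + 1))) ?_ ?_ ?_ ?_ ?_
        · intro c hc
          simp only [Finset.mem_filter, Finset.mem_univ, true_and] at hc
          simp only [Finset.mem_Icc]
          omega
        · intro m hm
          simp only [Finset.mem_Icc] at hm
          simp only [Finset.mem_filter, Finset.mem_univ, true_and]
          exact ⟨by show (a : ℕ) < (a : ℕ) + m; omega, by show (a : ℕ) + m ≤ (b : ℕ); omega⟩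
        · intro c hc
          simp only [Finset.mem_filter, Finset.mem_univ, true_and] at hc
          apply Fin.ext
          simp
          omega
        · intro m hm
          simp only [Finset.mem_Icc] at hm
          simp
        · intro c hc
          simp only [Finset.mem_filter, Finset.mem_univ, true_and] at hc
          rw [if_pos hc.1, if_pos hc.2]
          have e1 : (a : ℕ) + 1 + ((c : ℕ) - (a : ℕ)) = (c : ℕ) + 1 := by omega
          have e2 : (b : ℕ) - (a : ℕ) - ((c : ℕ) - (a : ℕ)) = (b : ℕ) - (c : ℕ) := by omega
          rw [e1, e2]
    · rw [if_neg hab]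
      apply Finset.sum_eq_zero
      intro c _
      rcases lt_or_ge (a : ℕ) (c : ℕ) with h1 | h1
      · rw [if_neg (show ¬ ((c : ℕ) ≤ (b : ℕ)) by omega), mul_zero]
      · rw [if_neg (show ¬ ((a : ℕ) < (c : ℕ)) by omega), zero_mul]

lemma Pcoef_gt (x : ℕ → ℕ → ℝ) (i k ℓ : ℕ) (h : k < ℓ) : Pcoef x i k ℓ = 0 := by
  unfold Pcoef
  rw [Finset.filter_false_of_mem, Finset.sum_empty]
  intro s _ hs
  have h2 : Finset.univ.card • 1 ≤ ∑ t, ((s t : ℕ) + 1) :=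
    Finset.card_nsmul_le_sum _ _ 1 (fun t _ => by omega)
  simp at h2
  omega

lemma Mpow_eq (d : ℕ) (x : ℕ → ℕ → ℝ) (n : ℕ) :
    (Mmat d x) ^ n = ∑ m ∈ Finset.range (n+1), (n.choose m : ℝ) • (Nmat d x) ^ m := by
  rw [Mmat_eq, show (1 : Matrix (Fin (d+1)) (Fin (d+1)) ℝ) + Nmat d x = Nmat d x + 1 from add_comm _ _, Commute.add_pow (Commute.one_right _)]
  refine Finset.sum_congr rfl ?_
  intro m _
  rw [one_pow, mul_one, (Nat.cast_commute (n.choose m) ((Nmat d x) ^ m)).symm.eq,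
    ← nsmul_eq_mul, ← Nat.cast_smul_eq_nsmul ℝ]

theorem stmt_4 (d : ℕ) (hd : 1 ≤ d) (x : ℕ → ℕ → ℝ) (n : ℕ)
    (k : ℕ) (hk1 : 1 ≤ k) (hkd : k ≤ d) (i : ℕ) (hi1 : 1 ≤ i) (hid : i ≤ d - k + 1) :
    (Mmat d x ^ n) ⟨i - 1, by omega⟩ ⟨i - 1 + k, by omega⟩ =
      ∑ ℓ ∈ Finset.Icc 1 k, (n.choose ℓ : ℝ) * Pcoef x i k ℓ := by
  rw [Mpow_eq]
  rw [Matrix.sum_apply]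
  have hterm : ∀ m, ((n.choose m : ℝ) • (Nmat d x) ^ m)
      (⟨i - 1, by omega⟩ : Fin (d+1)) (⟨i - 1 + k, by omega⟩ : Fin (d+1))
      = (n.choose m : ℝ) * Pcoef x i k m := by
    intro m
    rw [Matrix.smul_apply, smul_eq_mul, Npow_apply]
    rw [if_pos (show (i - 1 : ℕ) ≤ i - 1 + k by omega)]
    have e1 : (i - 1 : ℕ) + k - (i - 1) = k := by omega
    have e2 : (i - 1 : ℕ) + 1 = i := by omega
    rw [show (((⟨i - 1 + k, by omega⟩ : Fin (d+1)) : ℕ) - ((⟨i - 1, by omega⟩ : Fin (d+1)) : ℕ)) = k from e1,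
      show ((⟨i - 1, by omega⟩ : Fin (d+1)) : ℕ) + 1 = i from e2]
  simp only [hterm]
  have h1 : ∑ m ∈ Finset.range (n+1), (n.choose m : ℝ) * Pcoef x i k m
      = ∑ m ∈ Finset.range (max (n+1) (k+1)), (n.choose m : ℝ) * Pcoef x i k m := by
    apply Finset.sum_subset
    · intro m hm
      simp only [Finset.mem_range] at hm ⊢
      omega
    · intro m _ hm
      simp only [Finset.mem_range] at hm
      rw [Nat.choose_eq_zero_of_lt (by omega), Nat.cast_zero, zero_mul]
  have h2 : ∑ m ∈ Finset.Icc 1 k, (n.choose m : ℝ) * Pcoef x i k m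
      = ∑ m ∈ Finset.range (max (n+1) (k+1)), (n.choose m : ℝ) * Pcoef x i k m := by
    apply Finset.sum_subset
    · intro m hm
      simp only [Finset.mem_Icc] at hm
      simp only [Finset.mem_range]
      omega
    · intro m _ hm
      simp only [Finset.mem_Icc] at hm
      rcases Nat.eq_zero_or_pos m with h0 | h0
      · subst h0
        rw [Pcoef_zero_right, if_neg (by omega), mul_zero]
      · rw [Pcoef_gt _ _ _ _ (by omega), mul_zero]
  rw [h1, h2]
end

section
/- Let d ≥ 1, α ∈ ℝ, and let θ = (θ₁,…,θ_d) ∈ 𝕋^d. Then for every n ∈ ℤ and every 1 ≤ j ≤ d, the j-th coordinate of T_{α,d}^n(θ) equals Σ_{i=0}^{j} C(n, j−i)·θ_i, where θ₀ denotes the class of α in 𝕋 and C(n,m)·θ denotes the action of the integer C(n,m) on 𝕋. -/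
/-- The skew-product map `T_{α,d} : 𝕋^d → 𝕋^d`,
`T_{α,d}(θ₁,…,θ_d) = (θ₁+α, θ₂+θ₁, θ₃+θ₂, …, θ_d+θ_{d−1})` (coordinates 0-indexed). -/
noncomputable def Tmap (d : ℕ) (α : ℝ) (θ : Fin d → UnitAddCircle) : Fin d → UnitAddCircle :=
  fun j =>
    if (j : ℕ) = 0 then θ j + (α : UnitAddCircle)
    else θ j + θ ⟨(j : ℕ) - 1, Nat.lt_of_le_of_lt (Nat.sub_le _ _) j.isLt⟩

/-- The `j`-th coordinate (0-indexed; paper index `j+1`) of `T_{α,d}^n(θ)` equals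
`Σ_{i=0}^{j+1} C(n, j+1−i)·θ_i` with `θ₀ = α`.  The ℤ-iteration of the invertible map
`T_{α,d}` is encoded by a two-sided orbit `S : ℤ → 𝕋^d` with `S (m+1) = T_{α,d} (S m)`,
so that `S n = T_{α,d}^n (S 0)`; `Ring.choose n m` is the generalized binomial
coefficient `C(n,m)` for integer `n`. -/
theorem stmt_7 (d : ℕ) (hd : 1 ≤ d) (α : ℝ)
    (S : ℤ → Fin d → UnitAddCircle)
    (hS : ∀ m : ℤ, S (m + 1) = Tmap d α (S m)) :
    ∀ (n : ℤ) (j : Fin d),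
      S n j = Ring.choose n ((j : ℕ) + 1) • (α : UnitAddCircle) +
        ∑ i ∈ Finset.univ.filter (fun i : Fin d => i ≤ j),
          Ring.choose n ((j : ℕ) - (i : ℕ)) • S 0 i := by
  classical
  set F : ℤ → Fin d → UnitAddCircle := fun n j =>
    Ring.choose n ((j : ℕ) + 1) • (α : UnitAddCircle) +
      ∑ i ∈ Finset.univ.filter (fun i : Fin d => i ≤ j),
        Ring.choose n ((j : ℕ) - (i : ℕ)) • S 0 i with hFdef
  suffices h : ∀ n, S n = F n by intro n j; rw [h n]
  -- injectivity of Tmap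
  have hTinj : Function.Injective (Tmap d α) := by
    intro a b hab
    have key : ∀ m, ∀ h : m < d, a ⟨m, h⟩ = b ⟨m, h⟩ := by
      intro m
      induction m with
      | zero =>
        intro h
        have := congrFun hab ⟨0, h⟩
        simp only [Tmap, if_pos rfl] at this
        exact add_right_cancel this
      | succ k ih =>
        intro h
        have h2 := congrFun hab ⟨k + 1, h⟩
        have hk : k < d := Nat.lt_of_succ_lt h
        simp only [Tmap, Nat.succ_ne_zero, if_false, Nat.add_sub_cancel, ih hk] at h2
        exact add_right_cancel h2
    funext j
    have := key j j.isLt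
    simpa using this
  have hF0 : F 0 = S 0 := by
    funext j
    simp only [hFdef]
    rw [Ring.choose_zero_succ]
    rw [zero_smul, zero_add]
    rw [Finset.sum_eq_single j]
    · simp
    · intro i hi hne
      have hi' : i ≤ j := (Finset.mem_filter.mp hi).2
      have : (i : ℕ) < (j : ℕ) := Fin.lt_iff_val_lt_val.mp (lt_of_le_of_ne hi' hne)
      rw [Ring.choose_zero_pos _ (by omega), zero_smul]
    · intro hj
      simp at hj
  have hfilter0 : ∀ (j : Fin d), (j : ℕ) = 0 →
      Finset.univ.filter (fun i : Fin d => i ≤ j) = {j} := by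
    intro j hj
    ext i
    simp only [Finset.mem_filter, Finset.mem_univ, true_and, Finset.mem_singleton]
    constructor
    · intro h; exact le_antisymm h (by rw [Fin.le_def]; omega)
    · intro h; exact h.le
  have hFstep : ∀ n : ℤ, F (n + 1) = Tmap d α (F n) := by
    intro n
    funext j
    rcases Nat.eq_zero_or_pos (j : ℕ) with hj | hj
    · -- j = 0 case
      simp only [Tmap, hFdef, hj, hfilter0 j hj, Finset.sum_singleton, Nat.sub_self,
        Ring.choose_zero_right, one_smul, if_true, reduceIte]
      rw [Ring.choose_succ_succ n 0, Ring.choose_zero_right, add_smul, one_smul]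
      abel
    · -- j = k+1 case
      obtain ⟨k, hk⟩ : ∃ k, (j : ℕ) = k + 1 := ⟨(j : ℕ) - 1, by omega⟩
      have hkd : k < d := by omega
      set j' : Fin d := ⟨k, hkd⟩ with hj'
      have hfil : Finset.univ.filter (fun i : Fin d => i ≤ j)
          = insert j (Finset.univ.filter (fun i : Fin d => i ≤ j')) := by
        ext i
        simp only [Finset.mem_filter, Finset.mem_univ, true_and, Finset.mem_insert]
        rw [Fin.le_def, Fin.le_def, Fin.ext_iff]
        simp only [hj']
        omega
      have hnotmem : j ∉ Finset.univ.filter (fun i : Fin d => i ≤ j') := by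
        simp only [Finset.mem_filter, Finset.mem_univ, true_and, Fin.le_def, hj']
        omega
      have hTm : Tmap d α (F n) j = F n j + F n j' := by
        simp only [Tmap]
        rw [if_neg (by omega)]
        congr 2
        simp [Fin.ext_iff, hk, hj']
      rw [hTm]
      simp only [hFdef, hfil, Finset.sum_insert hnotmem, hk, Nat.sub_self,
        Ring.choose_zero_right]
      have hsum : ∀ i ∈ Finset.univ.filter (fun i : Fin d => i ≤ j'),
          Ring.choose (n + 1) (k + 1 - (i : ℕ)) • S 0 i
            = Ring.choose n (k - (i : ℕ)) • S 0 i + Ring.choose n (k + 1 - (i : ℕ)) • S 0 i := by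
        intro i hi
        have hik : (i : ℕ) ≤ k := (Finset.mem_filter.mp hi).2
        have h1 : k + 1 - (i : ℕ) = (k - (i : ℕ)) + 1 := by omega
        rw [h1, Ring.choose_succ_succ, add_smul]
      rw [Finset.sum_congr rfl hsum, Finset.sum_add_distrib]
      rw [show k + 1 + 1 = (k + 1) + 1 from rfl, Ring.choose_succ_succ]
      have hsub : ∀ i ∈ Finset.univ.filter (fun i : Fin d => i ≤ j'),
          Ring.choose n (k + 1 - (i : ℕ)) • S 0 i
            = Ring.choose n ((k : ℕ) - (i : ℕ) + 1) • S 0 i := by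
        intro i hi
        have hik : (i : ℕ) ≤ k := (Finset.mem_filter.mp hi).2
        congr 2
        omega
      rw [add_smul]
      abel
  intro n
  induction n using Int.induction_on with
  | zero => exact hF0.symm
  | succ k ih => rw [hS k, ih, hFstep]
  | pred k ih =>
    apply hTinj
    have h1 := hS (-(k : ℤ) - 1)
    rw [show (-(k : ℤ) - 1 + 1) = -k by ring] at h1
    have h2 := hFstep (-(k : ℤ) - 1)
    rw [show (-(k : ℤ) - 1 + 1) = -k by ring] at h2
    rw [← h1, ← h2, ih]
end

section
/- Let d ≥ 1, let p be a real polynomial of degree at most d with p(0) = 0, and let ε > 0. Then there exist a nonempty compact metric space X, a homeomorphism T : X → X such that every orbit {Tⁿx : n ∈ ℤ} is dense in X, and a nonempty open set U ⊆ X such that {n ∈ ℤ : U ∩ T^{−n}U ∩ T^{−2n}U ∩ ⋯ ∩ T^{−dn}U ≠ ∅} ⊆ {n ∈ ℤ : ‖p(n)‖ < ε}. -/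
/-- `‖a‖`: the distance from a real number `a` to the nearest integer. -/
noncomputable def distToInt (a : ℝ) : ℝ := sInf (Set.range fun m : ℤ => |a - (m : ℝ)|)

namespace Stmt9Aux

open Function Set

/-! ## `distToInt` as a norm on the circle -/

lemma distToInt_eq_norm (a : ℝ) : distToInt a = ‖(a : AddCircle (1 : ℝ))‖ := by
  have hnorm : ‖(a : AddCircle (1 : ℝ))‖ = |a - round a| := by
    rw [AddCircle.norm_eq]; norm_num
  rw [hnorm]
  refine IsLeast.csInf_eq ⟨⟨round a, rfl⟩, ?_⟩
  rintro x ⟨m, rfl⟩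
  rcases eq_or_ne m (round a) with h | h
  · simp [h]
  · have h1 : (1 : ℝ) ≤ |(m : ℝ) - (round a : ℝ)| := by
      have : ((1 : ℤ) : ℝ) ≤ |((m - round a : ℤ) : ℝ)| := by
        rw [← Int.cast_abs]
        exact_mod_cast Int.one_le_abs (sub_ne_zero.mpr h)
      push_cast at this
      linarith
    have h2 : |a - (round a : ℝ)| ≤ 1 / 2 := abs_sub_round a
    have h3 : |(m : ℝ) - (round a : ℝ)| ≤ |a - (round a : ℝ)| + |a - (m : ℝ)| := by
      have h4 := abs_add_le (a - (round a : ℝ)) ((m : ℝ) - a)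
      have e : a - (round a : ℝ) + ((m : ℝ) - a) = (m : ℝ) - (round a : ℝ) := by ring
      rw [e] at h4
      calc |(m : ℝ) - (round a : ℝ)| ≤ |a - (round a : ℝ)| + |(m : ℝ) - a| := h4
      _ = |a - (round a : ℝ)| + |a - (m : ℝ)| := by rw [abs_sub_comm (m : ℝ) a]
    linarith

/-! ## Finite differences -/

variable {M : Type*} [AddCommGroup M]

/-- Forward difference with step `n`. -/
def Δ (n : ℤ) (f : ℤ → M) : ℤ → M := fun m => f (m + n) - f m

lemma delta_comm (a b : ℤ) (f : ℤ → M) : Δ a (Δ b f) = Δ b (Δ a f) := by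
  funext m
  simp only [Δ]
  rw [add_right_comm m b a]
  abel

lemma delta_const {f : ℤ → M} {c : M} (h : ∀ m, Δ 1 f m = c) (n m : ℤ) :
    Δ n f m = n • c := by
  have key : ∀ n : ℤ, ∀ m : ℤ, f (m + n) = f m + n • c := by
    intro n
    induction n using Int.induction_on with
    | zero => simp
    | succ k ih =>
      intro m
      have h1 := h (m + k)
      simp only [Δ] at h1
      rw [sub_eq_iff_eq_add] at h1
      have e : m + ((k : ℤ) + 1) = m + (k : ℤ) + 1 := by ring
      rw [e, h1, ih m, add_zsmul, one_zsmul]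
      abel
    | pred k ih =>
      intro m
      have h1 := h (m + (-(k : ℤ) - 1))
      simp only [Δ] at h1
      have e : m + (-(k : ℤ) - 1) + 1 = m + -(k : ℤ) := by ring
      rw [e] at h1
      have h2 : f (m + (-(k : ℤ) - 1)) = f (m + -(k : ℤ)) - c := by
        rw [← h1]; abel
      rw [h2, ih m, sub_zsmul, one_zsmul]
      abel
  have hk := key n m
  simp only [Δ, hk]
  abel

lemma delta_iter_comm (n : ℤ) (D : ℕ) (f : ℤ → M) :
    Δ n ((Δ 1)^[D] f) = (Δ 1)^[D] (Δ n f) := by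
  induction D generalizing f with
  | zero => rfl
  | succ D ih =>
    rw [iterate_succ_apply, iterate_succ_apply, ih, delta_comm]

lemma delta_pow (n : ℤ) : ∀ (D : ℕ) (f : ℤ → M) (c : M),
    (∀ m, (Δ 1)^[D] f m = c) → ∀ m, (Δ n)^[D] f m = n ^ D • c := by
  intro D
  induction D with
  | zero => intro f c h m; simpa using h m
  | succ D ih =>
    intro f c h m
    have h1 : ∀ m', Δ 1 ((Δ 1)^[D] f) m' = c := by
      intro m'
      rw [← Function.iterate_succ_apply' (Δ 1) D f]
      exact h m'
    have h2 : ∀ m', (Δ 1)^[D] (Δ n f) m' = n • c := by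
      intro m'
      rw [← delta_iter_comm]
      exact delta_const h1 n m'
    rw [iterate_succ_apply, ih (Δ n f) (n • c) h2 m, smul_smul, ← pow_succ]

lemma delta_bound {E : Type*} [SeminormedAddCommGroup E] (n : ℤ) :
    ∀ (D : ℕ) (f : ℤ → E) (η : ℝ),
      (∀ i : ℕ, i ≤ D → ‖f ((i : ℤ) * n)‖ ≤ η) → ‖(Δ n)^[D] f 0‖ ≤ 2 ^ D * η := by
  intro D
  induction D with
  | zero =>
    intro f η h
    simpa using h 0 le_rfl
  | succ D ih =>
    intro f η h
    rw [iterate_succ_apply]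
    calc ‖(Δ n)^[D] (Δ n f) 0‖ ≤ 2 ^ D * (2 * η) := by
          apply ih
          intro i hi
          have h1 := h i (le_trans hi (Nat.le_succ D))
          have h2 := h (i + 1) (Nat.succ_le_succ hi)
          have e : ((i + 1 : ℕ) : ℤ) * n = (i : ℤ) * n + n := by push_cast; ring
          have h2' : ‖f ((i : ℤ) * n + n)‖ ≤ η := by rw [← e]; exact h2
          calc ‖Δ n f ((i : ℤ) * n)‖ = ‖f ((i : ℤ) * n + n) - f ((i : ℤ) * n)‖ := rfl
          _ ≤ ‖f ((i : ℤ) * n + n)‖ + ‖f ((i : ℤ) * n)‖ := norm_sub_le _ _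
          _ ≤ η + η := add_le_add h2' h1
          _ = 2 * η := by ring
    _ = 2 ^ (D + 1) * η := by ring

lemma delta_sub_const (n : ℤ) (f : ℤ → M) (b : M) :
    Δ n (fun m => f m - b) = Δ n f := by
  funext m
  simp only [Δ]
  abel

/-! ## The Weyl system -/

abbrev 𝕋 : Type := AddCircle (1 : ℝ)

abbrev W (d : ℕ) : Type := Fin d → Fin d → 𝕋

/-- The nilpotent "shift down" endomorphism. -/
noncomputable def NE (d : ℕ) : AddMonoid.End (W d) :=
  AddMonoidHom.mk'
    (fun y κ j =>
      if h : (j : ℕ) = 0 then 0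
      else y κ ⟨(j : ℕ) - 1, lt_of_le_of_lt (Nat.sub_le _ _) j.isLt⟩)
    (by
      intro a b
      funext κ j
      by_cases h : (j : ℕ) = 0 <;> simp [h])

lemma NE_apply (d : ℕ) (y : W d) (κ j : Fin d) :
    NE d y κ j = if h : (j : ℕ) = 0 then 0
      else y κ ⟨(j : ℕ) - 1, lt_of_le_of_lt (Nat.sub_le _ _) j.isLt⟩ := rfl

lemma NE_pow_app (d k : ℕ) : ∀ (y : W d) (κ : Fin d) (j : Fin d), (j : ℕ) < k →
    ((NE d ^ k) y) κ j = 0 := by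
  induction k with
  | zero => intro y κ j h; exact absurd h (Nat.not_lt_zero _)
  | succ k ih =>
    intro y κ j h
    rw [pow_succ']
    have hmul : ((NE d * NE d ^ k) y) κ j = (NE d ((NE d ^ k) y)) κ j := rfl
    rw [hmul, NE_apply]
    by_cases h0 : (j : ℕ) = 0
    · simp [h0]
    · rw [dif_neg h0]
      exact ih _ _ _ (by show (j : ℕ) - 1 < k; omega)

lemma NE_pow_d (d : ℕ) : NE d ^ d = 0 := by
  refine DFunLike.ext _ _ fun y => ?_
  funext κ j
  simpa using NE_pow_app d d y κ j j.isLt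

noncomputable def Aunit (d : ℕ) : (AddMonoid.End (W d))ˣ :=
  (IsNilpotent.isUnit_one_add ⟨d, NE_pow_d d⟩).unit

lemma Aunit_coe (d : ℕ) : ((Aunit d : (AddMonoid.End (W d))ˣ) : AddMonoid.End (W d))
    = 1 + NE d := IsUnit.unit_spec _

/-- The constant vector: `c κ` in coordinate `0` of block `κ`. -/
noncomputable def bvec (d : ℕ) (c : Fin d → ℝ) : W d :=
  fun κ j => if (j : ℕ) = 0 then ((c κ : ℝ) : 𝕋) else 0

/-- The Weyl skew-product transformation, as a permutation of `W d`. -/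
noncomputable def T0 (d : ℕ) (c : Fin d → ℝ) : Equiv.Perm (W d) where
  toFun y := (1 + NE d) y + bvec d c
  invFun z := (((Aunit d)⁻¹ : (AddMonoid.End (W d))ˣ) : AddMonoid.End (W d)) (z - bvec d c)
  left_inv y := by
    have h2 : ((((Aunit d)⁻¹ : (AddMonoid.End (W d))ˣ) : AddMonoid.End (W d)) *
        ((Aunit d : (AddMonoid.End (W d))ˣ) : AddMonoid.End (W d))) y = y := by
      rw [Units.inv_mul]; rfl
    calc (((Aunit d)⁻¹ : (AddMonoid.End (W d))ˣ) : AddMonoid.End (W d))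
          ((1 + NE d) y + bvec d c - bvec d c)
        = (((Aunit d)⁻¹ : (AddMonoid.End (W d))ˣ) : AddMonoid.End (W d))
          (((Aunit d : (AddMonoid.End (W d))ˣ) : AddMonoid.End (W d)) y) := by
          rw [add_sub_cancel_right, Aunit_coe]
      _ = y := h2
  right_inv z := by
    have h2 : (((Aunit d : (AddMonoid.End (W d))ˣ) : AddMonoid.End (W d)) *
        (((Aunit d)⁻¹ : (AddMonoid.End (W d))ˣ) : AddMonoid.End (W d))) (z - bvec d c)
        = z - bvec d c := by
      rw [Units.mul_inv]; rfl
    calc (1 + NE d) ((((Aunit d)⁻¹ : (AddMonoid.End (W d))ˣ) : AddMonoid.End (W d))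
          (z - bvec d c)) + bvec d c
        = (((Aunit d : (AddMonoid.End (W d))ˣ) : AddMonoid.End (W d)) *
          (((Aunit d)⁻¹ : (AddMonoid.End (W d))ˣ) : AddMonoid.End (W d))) (z - bvec d c)
            + bvec d c := by rw [Aunit_coe]; rfl
      _ = z := by rw [h2, sub_add_cancel]

lemma T0_apply (d : ℕ) (c : Fin d → ℝ) (y : W d) (κ j : Fin d) :
    T0 d c y κ j = y κ j + (if h : (j : ℕ) = 0 then ((c κ : ℝ) : 𝕋)
      else y κ ⟨(j : ℕ) - 1, lt_of_le_of_lt (Nat.sub_le _ _) j.isLt⟩) := by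
  show ((1 + NE d) y + bvec d c) κ j = _
  have h1 : (1 + NE d) y = y + NE d y := by
    rfl
  rw [h1]
  by_cases h : (j : ℕ) = 0
  · simp [NE_apply, bvec, h]
  · simp [NE_apply, bvec, h]

lemma T0_continuous (d : ℕ) (c : Fin d → ℝ) : Continuous (T0 d c) := by
  have h : ⇑(T0 d c) = fun y : W d => fun κ j => y κ j +
      (if h : (j : ℕ) = 0 then ((c κ : ℝ) : 𝕋)
        else y κ ⟨(j : ℕ) - 1, lt_of_le_of_lt (Nat.sub_le _ _) j.isLt⟩) := by
    funext y κ j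
    exact T0_apply d c y κ j
  rw [h]
  apply continuous_pi
  intro κ
  apply continuous_pi
  intro j
  by_cases h0 : (j : ℕ) = 0
  · simp only [dif_pos h0]
    exact (continuous_apply_apply κ j).add continuous_const
  · simp only [dif_neg h0]
    exact (continuous_apply_apply κ j).add
      (continuous_apply_apply κ _)

/-- The corresponding homeomorphism (inverse is automatically continuous). -/
noncomputable def H0 (d : ℕ) (c : Fin d → ℝ) : W d ≃ₜ W d :=
  (T0_continuous d c).homeoOfEquivCompactToT2 (f := T0 d c)

lemma H0_coe (d : ℕ) (c : Fin d → ℝ) : ⇑(H0 d c) = ⇑(T0 d c) := rfl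

lemma H0_symm_coe (d : ℕ) (c : Fin d → ℝ) : ⇑(H0 d c).symm = ⇑(T0 d c).symm := rfl

lemma perm_zpow_succ {α : Type*} (σ : Equiv.Perm α) (m : ℤ) (x : α) :
    (σ ^ (m + 1)) x = σ ((σ ^ m) x) := by
  rw [add_comm, zpow_add, zpow_one, Equiv.Perm.mul_apply]

/-- key coordinate difference identity -/
lemma coord_diff (d : ℕ) (c : Fin d → ℝ) (xv : W d) (κ : Fin d) :
    ∀ (t : ℕ) (ht : t < d) (m : ℤ),
      (Δ 1)^[t + 1] (fun m => ((T0 d c ^ m) xv) κ ⟨t, ht⟩) m = ((c κ : ℝ) : 𝕋) := by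
  intro t
  induction t with
  | zero =>
    intro ht m
    rw [iterate_one]
    show ((T0 d c ^ (m + 1)) xv) κ ⟨0, ht⟩ - ((T0 d c ^ m) xv) κ ⟨0, ht⟩ = _
    rw [perm_zpow_succ, T0_apply]
    simp
  | succ t ih =>
    intro ht m
    have step : (Δ 1) (fun m => ((T0 d c ^ m) xv) κ ⟨t + 1, ht⟩)
        = fun m => ((T0 d c ^ m) xv) κ ⟨t, Nat.lt_of_succ_lt ht⟩ := by
      funext m'
      show ((T0 d c ^ (m' + 1)) xv) κ ⟨t + 1, ht⟩ - ((T0 d c ^ m') xv) κ ⟨t + 1, ht⟩ = _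
      rw [perm_zpow_succ, T0_apply]
      rw [dif_neg (by simp : ¬ ((⟨t + 1, ht⟩ : Fin d) : ℕ) = 0)]
      have e : (⟨((⟨t + 1, ht⟩ : Fin d) : ℕ) - 1,
          lt_of_le_of_lt (Nat.sub_le _ _) (⟨t + 1, ht⟩ : Fin d).isLt⟩ : Fin d)
          = ⟨t, Nat.lt_of_succ_lt ht⟩ := by
        apply Fin.ext
        simp
      rw [e]
      abel
    rw [iterate_succ_apply, step]
    exact ih (Nat.lt_of_succ_lt ht) m

/-! ## Minimal subsystem -/

lemma exists_minimal (d : ℕ) (c : Fin d → ℝ) :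
    ∃ Xs : Set (W d), Xs.Nonempty ∧ IsClosed Xs ∧ (⇑(T0 d c) '' Xs = Xs) ∧
      ∀ x ∈ Xs, closure (Set.range fun n : ℤ => ((T0 d c) ^ n) x) = Xs := by
  classical
  set e := T0 d c with he
  set S : Set (Set (W d)) := {A | A.Nonempty ∧ IsClosed A ∧ ⇑e '' A = A} with hS
  have hWS : Set.univ ∈ S := by
    refine ⟨Set.univ_nonempty, isClosed_univ, ?_⟩
    rw [Set.image_univ, Equiv.range_eq_univ]
  have hchain_cond : ∀ chain ⊆ S, IsChain (· ⊆ ·) chain → chain.Nonempty →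
      ∃ lb ∈ S, ∀ s ∈ chain, lb ⊆ s := by
    intro chain hsub hchain hne
    refine ⟨⋂₀ chain, ⟨?_, ?_, ?_⟩, fun s hs => Set.sInter_subset_of_mem hs⟩
    · haveI : Nonempty chain := hne.to_subtype
      apply IsCompact.nonempty_sInter_of_directed_nonempty_isCompact_isClosed
      · intro a ha b hb
        rcases hchain.total ha hb with h | h
        · exact ⟨a, ha, le_refl _, h⟩
        · exact ⟨b, hb, h, le_refl _⟩
      · exact fun A hA => (hsub hA).1
      · exact fun A hA => (hsub hA).2.1.isCompact
      · exact fun A hA => (hsub hA).2.1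
    · exact isClosed_sInter fun A hA => (hsub hA).2.1
    · rw [Equiv.image_eq_preimage_symm, Set.preimage_sInter, Set.sInter_eq_biInter]
      apply Set.iInter₂_congr
      intro A hA
      rw [← Equiv.image_eq_preimage_symm, (hsub hA).2.2]
  obtain ⟨Xs, -, hXSmin⟩ := zorn_superset_nonempty S hchain_cond Set.univ hWS
  have hXS : Xs ∈ S := hXSmin.1
  have hXne : Xs.Nonempty := hXS.1
  have hXcl : IsClosed Xs := hXS.2.1
  have himg : ⇑e '' Xs = Xs := hXS.2.2
  have hmem_T : ∀ x ∈ Xs, e x ∈ Xs := by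
    intro x hx
    rw [← himg]
    exact Set.mem_image_of_mem _ hx
  have hmem_Tinv : ∀ x, e x ∈ Xs → x ∈ Xs := by
    intro x hx
    rw [← himg] at hx
    obtain ⟨y, hy, hyx⟩ := hx
    rwa [← e.injective hyx]
  refine ⟨Xs, hXne, hXcl, himg, ?_⟩
  intro x hx
  have horb : ∀ n : ℤ, (e ^ n) x ∈ Xs := by
    intro n
    induction n using Int.induction_on with
    | zero => simpa using hx
    | succ k ihk =>
      rw [perm_zpow_succ]
      exact hmem_T _ ihk
    | pred k ihk =>
      apply hmem_Tinv
      have hh : e ((e ^ (-(k : ℤ) - 1)) x) = (e ^ (-(k : ℤ))) x := by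
        rw [← perm_zpow_succ]
        norm_num
      rw [hh]
      exact ihk
  set A := closure (Set.range fun n : ℤ => (e ^ n) x) with hA
  have hAsub : A ⊆ Xs := by
    apply closure_minimal _ hXcl
    rintro - ⟨n, rfl⟩
    exact horb n
  have hAinv : ⇑e '' A = A := by
    rw [hA, show ⇑e = ⇑(H0 d c) from rfl, Homeomorph.image_closure]
    have himgrange : ⇑(H0 d c) '' (Set.range fun n : ℤ => (e ^ n) x)
        = (Set.range fun n : ℤ => (e ^ n) x) := by
      ext z
      simp only [Set.mem_image, Set.mem_range]
      constructor
      · rintro ⟨-, ⟨nn, rfl⟩, rfl⟩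
        refine ⟨nn + 1, ?_⟩
        show (e ^ (nn + 1)) x = e ((e ^ nn) x)
        exact perm_zpow_succ e nn x
      · rintro ⟨nn, rfl⟩
        refine ⟨(e ^ (nn - 1)) x, ⟨nn - 1, rfl⟩, ?_⟩
        show e ((e ^ (nn - 1)) x) = (e ^ nn) x
        rw [← perm_zpow_succ]
        norm_num
    rw [himgrange]
  have hAS : A ∈ S := ⟨⟨x, subset_closure ⟨0, by simp⟩⟩, isClosed_closure, hAinv⟩
  exact le_antisymm hAsub (hXSmin.2 hAS hAsub)

end Stmt9Aux

open Stmt9Aux Function Set in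
theorem stmt_9 (d : ℕ) (hd : 1 ≤ d) (p : Polynomial ℝ)
    (hdeg : p.natDegree ≤ d) (hp0 : p.eval 0 = 0) (ε : ℝ) (hε : 0 < ε) :
    ∃ (X : Type) (_ : MetricSpace X) (_ : CompactSpace X) (_ : Nonempty X)
      (T : Equiv.Perm X),
      Continuous (⇑T) ∧ Continuous (⇑T.symm) ∧
      (∀ x : X, Dense (Set.range fun n : ℤ => (T ^ n) x)) ∧
      ∃ U : Set X, IsOpen U ∧ U.Nonempty ∧
        ∀ n : ℤ,
          (⋂ i ∈ Finset.range (d + 1), (⇑(T ^ ((i : ℤ) * n)))⁻¹' U).Nonempty →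
          distToInt (p.eval (n : ℝ)) < ε := by
  classical
  -- the coefficients
  set c : Fin d → ℝ := fun κ => p.coeff ((κ : ℕ) + 1) with hc
  obtain ⟨Xs, hXne, hXcl, himg, horbit⟩ := exists_minimal d c
  set e := T0 d c with he
  have hmem_T : ∀ a ∈ Xs, e a ∈ Xs := by
    intro a ha
    rw [← himg]
    exact Set.mem_image_of_mem _ ha
  have hiff : ∀ a, a ∈ Xs ↔ e a ∈ Xs := by
    intro a
    refine ⟨hmem_T a, fun ha => ?_⟩
    rw [← himg] at ha
    obtain ⟨y, hy, hyx⟩ := ha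
    rwa [← e.injective hyx]
  -- the subtype
  refine ⟨{y : W d // y ∈ Xs}, inferInstance, ?_, ?_, ?_⟩
  · exact isCompact_iff_compactSpace.mp (hXcl.isCompact)
  · obtain ⟨β, hβ⟩ := hXne
    exact ⟨⟨β, hβ⟩⟩
  -- the permutation
  set T : Equiv.Perm {y : W d // y ∈ Xs} :=
    { toFun := fun y => ⟨e y.1, (hiff y.1).1 y.2⟩
      invFun := fun y => ⟨e.symm y.1, (hiff _).2 (by rw [Equiv.apply_symm_apply]; exact y.2)⟩
      left_inv := fun y => Subtype.ext (e.symm_apply_apply y.1)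
      right_inv := fun y => Subtype.ext (e.apply_symm_apply y.1) } with hT
  refine ⟨T, ?_, ?_, ?_, ?_⟩
  · -- continuity of T
    apply Continuous.subtype_mk
    exact (T0_continuous d c).comp continuous_subtype_val
  · -- continuity of T.symm
    apply Continuous.subtype_mk
    have hsc : Continuous (⇑e.symm) := by
      rw [← H0_symm_coe d c]
      exact (H0 d c).symm.continuous
    exact hsc.comp continuous_subtype_val
  · -- dense orbits
    have hLval : ∀ m : ℤ, ∀ y : {y : W d // y ∈ Xs}, ((T ^ m) y : W d) = (e ^ m) y.1 := by
      intro m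
      induction m using Int.induction_on with
      | zero => intro y; simp
      | succ k ih =>
        intro y
        rw [perm_zpow_succ T k y, perm_zpow_succ e k y.1, ← ih y]
        rfl
      | pred k ih =>
        intro y
        have h1 : (T ^ (-(k : ℤ) - 1)) y = (T ^ (-(k : ℤ))) (T⁻¹ y) := by
          rw [sub_eq_add_neg, zpow_add, Equiv.Perm.mul_apply, zpow_neg_one]
        have h2 : (e ^ (-(k : ℤ) - 1)) y.1 = (e ^ (-(k : ℤ))) (e⁻¹ y.1) := by
          rw [sub_eq_add_neg, zpow_add, Equiv.Perm.mul_apply, zpow_neg_one]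
        rw [h1, h2, ih (T⁻¹ y)]
        rfl
    -- this hLval is needed again below; we prove density here
    intro x
    rw [dense_iff_inter_open]
    intro V hV hVne
    obtain ⟨O, hO, rfl⟩ := isOpen_induced_iff.mp hV
    obtain ⟨v, hv⟩ := hVne
    have hvcl : (v : W d) ∈ closure (Set.range fun n : ℤ => (e ^ n) x.1) := by
      rw [horbit x.1 x.2]
      exact v.2
    rw [mem_closure_iff] at hvcl
    obtain ⟨z, hzO, nn, rfl⟩ := hvcl O hO hv
    refine ⟨(T ^ nn) x, ?_, ⟨nn, rfl⟩⟩
    simp only [Set.mem_preimage]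
    rw [hLval nn x]
    exact hzO
  -- the open set U and the main estimate
  · have hLval : ∀ m : ℤ, ∀ y : {y : W d // y ∈ Xs}, ((T ^ m) y : W d) = (e ^ m) y.1 := by
      intro m
      induction m using Int.induction_on with
      | zero => intro y; simp
      | succ k ih =>
        intro y
        rw [perm_zpow_succ T k y, perm_zpow_succ e k y.1, ← ih y]
        rfl
      | pred k ih =>
        intro y
        have h1 : (T ^ (-(k : ℤ) - 1)) y = (T ^ (-(k : ℤ))) (T⁻¹ y) := by
          rw [sub_eq_add_neg, zpow_add, Equiv.Perm.mul_apply, zpow_neg_one]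
        have h2 : (e ^ (-(k : ℤ) - 1)) y.1 = (e ^ (-(k : ℤ))) (e⁻¹ y.1) := by
          rw [sub_eq_add_neg, zpow_add, Equiv.Perm.mul_apply, zpow_neg_one]
        rw [h1, h2, ih (T⁻¹ y)]
        rfl
    obtain ⟨β, hβ⟩ := hXne
    set δ : ℝ := ε / (d * 2 ^ d + 1) with hδ
    have hden : (0 : ℝ) < d * 2 ^ d + 1 := by positivity
    have hδpos : 0 < δ := div_pos hε hden
    refine ⟨Subtype.val ⁻¹' Metric.ball β δ, Metric.isOpen_ball.preimage continuous_subtype_val,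
      ⟨⟨β, hβ⟩, by simp [Metric.mem_ball, hδpos]⟩, ?_⟩
    intro n ⟨x', hx'⟩
    simp only [Set.mem_iInter, Set.mem_preimage, Finset.mem_range] at hx'
    -- coordinatewise distance bounds
    have hdist : ∀ i : ℕ, i ≤ d → ∀ κ j : Fin d,
        dist (((e ^ ((i : ℤ) * n)) x'.1) κ j) (β κ j) < δ := by
      intro i hi κ j
      have h1 := hx' i (Nat.lt_succ_of_le hi)
      rw [Metric.mem_ball] at h1
      have h2 : dist ((e ^ ((i : ℤ) * n)) x'.1) β < δ := by
        rw [← hLval ((i : ℤ) * n) x']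
        exact h1
      calc dist (((e ^ ((i : ℤ) * n)) x'.1) κ j) (β κ j)
          ≤ dist (((e ^ ((i : ℤ) * n)) x'.1) κ) (β κ) := dist_le_pi_dist _ _ j
        _ ≤ dist ((e ^ ((i : ℤ) * n)) x'.1) β := dist_le_pi_dist _ _ κ
        _ < δ := h2
    -- per-coefficient estimate
    have hterm : ∀ κ : Fin d,
        ‖(n ^ ((κ : ℕ) + 1)) • ((c κ : ℝ) : 𝕋)‖ ≤ 2 ^ d * δ := by
      intro κ
      set g : ℤ → 𝕋 := fun m => ((e ^ m) x'.1) κ ⟨(κ : ℕ), κ.isLt⟩ with hg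
      have hdiff : ∀ m, (Δ 1)^[(κ : ℕ) + 1] g m = ((c κ : ℝ) : 𝕋) :=
        coord_diff d c x'.1 κ (κ : ℕ) κ.isLt
      have hval : ∀ m, (Δ n)^[(κ : ℕ) + 1] g m = n ^ ((κ : ℕ) + 1) • ((c κ : ℝ) : 𝕋) :=
        delta_pow n ((κ : ℕ) + 1) g _ hdiff
      set g' : ℤ → 𝕋 := fun m => g m - β κ ⟨(κ : ℕ), κ.isLt⟩ with hg'
      have hgg' : (Δ n)^[(κ : ℕ) + 1] g' = (Δ n)^[(κ : ℕ) + 1] g := by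
        rw [iterate_succ_apply, iterate_succ_apply, hg', delta_sub_const]
      have hb : ‖(Δ n)^[(κ : ℕ) + 1] g' 0‖ ≤ 2 ^ ((κ : ℕ) + 1) * δ := by
        apply delta_bound
        intro i hi
        have hid : i ≤ d := le_trans hi κ.isLt
        have := hdist i hid κ ⟨(κ : ℕ), κ.isLt⟩
        rw [dist_eq_norm] at this
        exact le_of_lt this
      rw [hgg', hval 0] at hb
      calc ‖(n ^ ((κ : ℕ) + 1)) • ((c κ : ℝ) : 𝕋)‖ ≤ 2 ^ ((κ : ℕ) + 1) * δ := hb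
        _ ≤ 2 ^ d * δ := by
            apply mul_le_mul_of_nonneg_right _ (le_of_lt hδpos)
            exact pow_le_pow_right₀ one_le_two κ.isLt
    -- sum up
    have hc0 : p.coeff 0 = 0 := by
      rw [Polynomial.coeff_zero_eq_eval_zero]; exact hp0
    have hev : p.eval ((n : ℤ) : ℝ) = ∑ i ∈ Finset.range d, p.coeff (i + 1) * ((n : ℤ) : ℝ) ^ (i + 1) := by
      rw [Polynomial.eval_eq_sum_range' (lt_of_le_of_lt hdeg (Nat.lt_succ_self d)),
        Finset.sum_range_succ']
      simp [hc0]
    set φ : ℝ →+ 𝕋 := QuotientAddGroup.mk' (AddSubgroup.zmultiples (1 : ℝ)) with hφ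
    have hφcoe : ∀ r : ℝ, (r : 𝕋) = φ r := fun _ => rfl
    have hcast : ((p.eval ((n : ℤ) : ℝ) : ℝ) : 𝕋)
        = ∑ i ∈ Finset.range d, (n ^ (i + 1)) • ((p.coeff (i + 1) : ℝ) : 𝕋) := by
      rw [hφcoe, hev, map_sum]
      apply Finset.sum_congr rfl
      intro i _
      have : p.coeff (i + 1) * ((n : ℤ) : ℝ) ^ (i + 1)
          = (n ^ (i + 1) : ℤ) • (p.coeff (i + 1) : ℝ) := by
        rw [zsmul_eq_mul]
        push_cast
        ring
      rw [this, map_zsmul]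
      rfl
    rw [distToInt_eq_norm, hcast]
    have hbound : ‖∑ i ∈ Finset.range d, (n ^ (i + 1)) • ((p.coeff (i + 1) : ℝ) : 𝕋)‖
        ≤ (d : ℝ) * (2 ^ d * δ) := by
      calc ‖∑ i ∈ Finset.range d, (n ^ (i + 1)) • ((p.coeff (i + 1) : ℝ) : 𝕋)‖
          ≤ ∑ i ∈ Finset.range d, ‖(n ^ (i + 1)) • ((p.coeff (i + 1) : ℝ) : 𝕋)‖ :=
            norm_sum_le _ _
        _ ≤ ∑ _i ∈ Finset.range d, 2 ^ d * δ := by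
            apply Finset.sum_le_sum
            intro i hi
            have hi' : i < d := Finset.mem_range.mp hi
            have := hterm ⟨i, hi'⟩
            simpa using this
        _ = (d : ℝ) * (2 ^ d * δ) := by
            rw [Finset.sum_const, Finset.card_range, nsmul_eq_mul]
    have hlt : (d : ℝ) * (2 ^ d * δ) < ε := by
      have h1 : (d : ℝ) * 2 ^ d * δ < (d * 2 ^ d + 1) * δ := by
        apply mul_lt_mul_of_pos_right _ hδpos
        linarith
      have h2 : ((d : ℝ) * 2 ^ d + 1) * δ = ε := by
        rw [hδ]
        field_simp
      calc (d : ℝ) * (2 ^ d * δ) = (d : ℝ) * 2 ^ d * δ := by ring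
        _ < (d * 2 ^ d + 1) * δ := h1
        _ = ε := h2
    exact lt_of_le_of_lt hbound hlt
end

section
/- Let d ≥ 1, k ≥ 1, let q₁, …, q_k be real polynomials of degree at most d with q_i(0) = 0, and let ε₁, …, ε_k > 0. Then there exist a measure-preserving system (X, 𝒳, μ, T) and a measurable set B ⊆ X with μ(B) > 0 such that {n ∈ ℤ : μ(B ∩ T^{−n}B ∩ T^{−2n}B ∩ ⋯ ∩ T^{−dn}B) > 0} ⊆ ⋂_{i=1}^k {n ∈ ℤ : ‖q_i(n)‖ < ε_i}. -/
open MeasureTheory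

lemma round_min (x : ℝ) (m : ℤ) : |x - round x| ≤ |x - m| := by
  by_cases h : (1:ℝ)/2 ≤ |x - m|
  · linarith [abs_sub_round x]
  · push_neg at h
    have hrm : |(round x - m : ℤ)| < 1 := by
      have h1 := abs_sub_round x
      have : |((round x - m : ℤ) : ℝ)| < 1 := by
        push_cast
        calc |(round x:ℝ) - m| ≤ |(round x:ℝ) - x| + |x - m| := abs_sub_le _ _ _
        _ < 1 := by rw [abs_sub_comm]; linarith
      exact_mod_cast this
    have : round x = m := by have := Int.abs_lt_one_iff.mp hrm; omega
    rw [this]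

lemma distToInt_eq (x : ℝ) : distToInt x = |x - round x| := by
  unfold distToInt
  apply le_antisymm
  · exact csInf_le ⟨0, by rintro r ⟨m, rfl⟩; positivity⟩ ⟨round x, rfl⟩
  · exact le_csInf ⟨_, ⟨0, rfl⟩⟩ (by rintro r ⟨m, rfl⟩; exact round_min x m)

lemma distToInt_eq_norm (x : ℝ) : distToInt x = ‖(x : AddCircle (1:ℝ))‖ := by
  rw [distToInt_eq]
  exact (UnitAddCircle.norm_eq).symm

lemma distToInt_zero : distToInt 0 = 0 := by simp [distToInt_eq]

lemma distToInt_nonneg (x : ℝ) : 0 ≤ distToInt x := by rw [distToInt_eq]; positivity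

lemma distToInt_sum_le {ι : Type*} (s : Finset ι) (g : ι → ℝ) :
    distToInt (∑ i ∈ s, g i) ≤ ∑ i ∈ s, distToInt (g i) := by
  classical
  induction s using Finset.cons_induction with
  | empty => simp [distToInt_zero]
  | cons a s ha ih =>
    rw [Finset.sum_cons, Finset.sum_cons]
    calc distToInt (g a + ∑ i ∈ s, g i) ≤ distToInt (g a) + distToInt (∑ i ∈ s, g i) := by
          simp only [distToInt_eq_norm]; exact norm_add_le ((g a : ℝ) : AddCircle (1:ℝ)) ((∑ i ∈ s, g i : ℝ) : AddCircle (1:ℝ))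
    _ ≤ _ := by linarith [ih]

variable {M : Type*} [AddCommGroup M]

def Diff (n : ℤ) (u : ℤ → M) : ℤ → M := fun t => u (t + n) - u t

lemma diff_comm (m n : ℤ) (u : ℤ → M) : Diff m (Diff n u) = Diff n (Diff m u) := by
  funext t
  simp only [Diff]
  rw [add_right_comm]
  abel

lemma diff_iterate_comm (j : ℕ) (m n : ℤ) (u : ℤ → M) :
    (Diff m)^[j] (Diff n u) = Diff n ((Diff m)^[j] u) := by
  induction j generalizing u with
  | zero => rfl
  | succ j ih =>
    rw [Function.iterate_succ_apply, Function.iterate_succ_apply, diff_comm, ih]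

lemma affine_of_diff_const {w : ℤ → M} {a : M} (h : ∀ t, Diff 1 w t = a) :
    ∀ t, w t = w 0 + t • a := by
  intro t
  induction t using Int.induction_on with
  | zero => simp
  | succ i ih =>
    have := h i
    simp only [Diff] at this
    push_cast
    rw [show ((i:ℤ) + 1) = (i+1 : ℤ) from rfl] at this ⊢
    have : w ((i:ℤ)+1) = w i + a := by rw [← this]; abel
    rw [this, ih]
    rw [add_smul, one_smul]
    abel
  | pred i ih =>
    have h2 := h (-(i:ℤ) - 1)
    simp only [Diff] at h2
    rw [show (-(i:ℤ) - 1 + 1) = -(i:ℤ) from by ring] at h2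
    have : w (-(i:ℤ) - 1) = w (-(i:ℤ)) - a := by rw [← h2]; abel
    rw [show w (-(i:ℤ) - 1) = w (-(i:ℤ)) - a from by rw [← h2]; abel, ih,
      show (-(i:ℤ) - 1) • a = (-(i:ℤ)) • a - (1:ℤ) • a from by rw [← sub_smul], one_smul]
    abel

lemma diff_pow_of_diff_one_pow {j : ℕ} {u : ℤ → M} {a : M}
    (h : (Diff 1)^[j] u = fun _ => a) (n : ℤ) :
    (Diff n)^[j] u = fun _ => (n ^ j : ℤ) • a := by
  induction j generalizing u a with
  | zero => simpa using h
  | succ j ih =>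
    have hw : ∀ t, Diff 1 ((Diff 1)^[j] u) t = a := by
      have h1 : (Diff 1)^[j+1] u = Diff 1 ((Diff 1)^[j] u) := Function.iterate_succ_apply' _ _ _
      rw [← h1, h]; intro t; rfl
    have haff := affine_of_diff_const hw
    have hdn : (Diff 1)^[j] (Diff n u) = fun _ => n • a := by
      rw [diff_iterate_comm]
      funext t
      simp only [Diff]
      rw [haff (t + n), haff t, add_smul]
      abel
    have := ih hdn
    rw [Function.iterate_succ_apply, this]
    funext t
    rw [smul_smul, ← pow_succ]

lemma diff_pow_norm_bound {G : Type*} [SeminormedAddCommGroup G] (j : ℕ) (n : ℤ) :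
    ∀ (u : ℤ → G) (δ : ℝ), (∀ i : ℕ, i ≤ j → ‖u ((i:ℤ) * n)‖ < δ) →
    ‖(Diff n)^[j] u 0‖ < 2 ^ j * δ := by
  induction j with
  | zero =>
    intro u δ h
    simpa using h 0 le_rfl
  | succ j ih =>
    intro u δ h
    rw [Function.iterate_succ_apply]
    have := ih (Diff n u) (2 * δ) (by
      intro i hi
      have h1 := h i (Nat.le_succ_of_le hi)
      have h2 := h (i+1) (Nat.succ_le_succ hi)
      have : Diff n u ((i:ℤ) * n) = u (((i:ℕ)+1 : ℤ) * n) - u ((i:ℤ) * n) := by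
        simp only [Diff]; ring_nf
      rw [this]
      calc ‖u (((i:ℕ)+1 : ℤ) * n) - u ((i:ℤ) * n)‖
          ≤ ‖u (((i:ℕ)+1 : ℤ) * n)‖ + ‖u ((i:ℤ) * n)‖ := norm_sub_le _ _
        _ < 2 * δ := by push_cast at h2 ⊢; linarith)
    calc ‖(Diff n)^[j] (Diff n u) 0‖ < 2 ^ j * (2 * δ) := this
      _ = 2 ^ (j+1) * δ := by ring


local notation "𝕋" => AddCircle (1:ℝ)

instance : IsProbabilityMeasure (volume : Measure 𝕋) := by
  constructor; simp [AddCircle.measure_univ]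

structure Tower (j : ℕ) (a : ℝ) where
  X : Type
  mX : MeasurableSpace X
  μ : @Measure X mX
  prob : @IsProbabilityMeasure X mX μ
  T : Equiv.Perm X
  measT : @Measurable X X mX mX ⇑T
  measTs : @Measurable X X mX mX ⇑T.symm
  mpT : @MeasurePreserving X X mX mX ⇑T μ μ
  mpTs : @MeasurePreserving X X mX mX ⇑T.symm μ μ
  f : X → 𝕋
  measf : @Measurable X 𝕋 mX _ f
  key : ∀ x : X, (Diff 1)^[j] (fun t : ℤ => f ((T ^ t) x)) = fun _ => ((a : 𝕋))
  small : ∀ δ : ℝ, 0 < δ → ∃ B : Set X, @MeasurableSet X mX B ∧ 0 < μ B ∧ ∀ x ∈ B, ‖f x‖ < δ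

lemma perm_zpow_succ {X : Type} (σ : Equiv.Perm X) (s : ℤ) (x : X) :
    (σ ^ (s+1)) x = σ ((σ ^ s) x) := by
  rw [add_comm, zpow_add, zpow_one]; rfl

lemma perm_zpow_pred {X : Type} (σ : Equiv.Perm X) (s : ℤ) (x : X) :
    (σ ^ (s-1)) x = σ.symm ((σ ^ s) x) := by
  rw [sub_eq_neg_add, zpow_add, zpow_neg, zpow_one]; rfl

noncomputable def towerOne (a : ℝ) : Tower 1 a where
  X := 𝕋
  mX := inferInstance
  μ := volume
  prob := inferInstance
  T := Equiv.addRight ((a : 𝕋))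
  measT := measurable_add_const _
  measTs := by simp only [Equiv.coe_addRight, Equiv.symm]; exact measurable_add_const _
  mpT := measurePreserving_add_right volume _
  mpTs := by
    have : (⇑(Equiv.addRight ((a:𝕋))).symm) = fun x => x + (-(a:𝕋)) := by
      funext x; simp [Equiv.addRight, sub_eq_add_neg]
    rw [this]; exact measurePreserving_add_right volume _
  f := id
  measf := measurable_id
  key := by
    intro x
    funext t
    simp only [Function.iterate_one, Diff, id]
    rw [perm_zpow_succ]
    simp [Equiv.addRight]
  small := by
    intro δ hδ
    refine ⟨Metric.ball (0 : 𝕋) δ, Metric.isOpen_ball.measurableSet, ?_, ?_⟩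
    · exact Metric.isOpen_ball.measure_pos volume ⟨0, Metric.mem_ball_self hδ⟩
    · intro x hx
      simpa [mem_ball_zero_iff] using hx

noncomputable def skewPerm {j : ℕ} {a : ℝ} (W : Tower j a) : Equiv.Perm (W.X × 𝕋) where
  toFun := fun p => (W.T p.1, p.2 + W.f p.1)
  invFun := fun p => (W.T.symm p.1, p.2 - W.f (W.T.symm p.1))
  left_inv := by intro p; simp
  right_inv := by intro p; simp

lemma skewPerm_fst {j : ℕ} {a : ℝ} (W : Tower j a) (s : ℤ) (p : W.X × 𝕋) :
    ((skewPerm W ^ s) p).1 = (W.T ^ s) p.1 := by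
  induction s using Int.induction_on with
  | zero => rfl
  | succ i ih =>
    rw [perm_zpow_succ, perm_zpow_succ, ← ih]
    rfl
  | pred i ih =>
    rw [show (-(i:ℤ) - 1) = (-(i:ℤ)) - 1 from rfl, perm_zpow_pred, perm_zpow_pred, ← ih]
    rfl

lemma skewPerm_diff {j : ℕ} {a : ℝ} (W : Tower j a) (p : W.X × 𝕋) :
    Diff 1 (fun s : ℤ => ((skewPerm W ^ s) p).2) = fun s : ℤ => W.f ((W.T ^ s) p.1) := by
  funext s
  simp only [Diff]
  rw [perm_zpow_succ]
  have : (skewPerm W) ((skewPerm W ^ s) p) =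
      (W.T ((skewPerm W ^ s) p).1, ((skewPerm W ^ s) p).2 + W.f ((skewPerm W ^ s) p).1) := rfl
  rw [this]
  simp [skewPerm_fst]

noncomputable def towerSucc {j : ℕ} {a : ℝ} (W : Tower j a) : Tower (j+1) a := by
  letI := W.mX
  haveI := W.prob
  refine
  { X := W.X × 𝕋
    mX := inferInstance
    μ := W.μ.prod volume
    prob := inferInstance
    T := skewPerm W
    measT := ((W.measT.comp measurable_fst).prodMk
      (measurable_snd.add (W.measf.comp measurable_fst)))
    measTs := ((W.measTs.comp measurable_fst).prodMk
      (measurable_snd.sub ((W.measf.comp W.measTs).comp measurable_fst)))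
    mpT := ?_
    mpTs := ?_
    f := Prod.snd
    measf := measurable_snd
    key := ?_
    small := ?_ }
  · apply W.mpT.skew_product (g := fun x t => t + W.f x)
    · exact measurable_snd.add (W.measf.comp measurable_fst)
    · exact Filter.Eventually.of_forall fun x =>
        (measurePreserving_add_right volume (W.f x)).map_eq
  · apply W.mpTs.skew_product (g := fun x t => t - W.f (W.T.symm x))
    · exact measurable_snd.sub ((W.measf.comp W.measTs).comp measurable_fst)
    · refine Filter.Eventually.of_forall fun x => ?_
      rw [show (fun t : 𝕋 => t - W.f (W.T.symm x)) = fun t : 𝕋 => t + (-(W.f (W.T.symm x))) from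
        funext fun t => sub_eq_add_neg _ _]
      exact (measurePreserving_add_right volume (-(W.f (W.T.symm x)))).map_eq
  · intro p
    rw [Function.iterate_succ_apply]
    have h1 : Diff 1 (fun t : ℤ => Prod.snd ((skewPerm W ^ t) p)) =
        fun s : ℤ => W.f ((W.T ^ s) p.1) := skewPerm_diff W p
    rw [h1]
    exact W.key p.1
  · intro δ hδ
    refine ⟨Set.univ ×ˢ Metric.ball (0 : 𝕋) δ,
      MeasurableSet.univ.prod Metric.isOpen_ball.measurableSet, ?_, ?_⟩
    · rw [Measure.prod_prod]
      simp only [measure_univ, one_mul]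
      exact Metric.isOpen_ball.measure_pos volume ⟨0, Metric.mem_ball_self hδ⟩
    · rintro ⟨x, t⟩ ⟨-, ht⟩
      simpa [mem_ball_zero_iff] using ht

lemma towerExists (j : ℕ) (hj : 1 ≤ j) (a : ℝ) : Nonempty (Tower j a) := by
  induction j, hj using Nat.le_induction with
  | base => exact ⟨towerOne a⟩
  | succ j hj ih => exact ⟨towerSucc ih.some⟩

def Good (d : ℕ) (P : ℤ → Prop) : Prop :=
  ∃ (X : Type) (_ : MeasurableSpace X) (μ : Measure X)
    (_ : IsProbabilityMeasure μ) (T : Equiv.Perm X),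
    Measurable (⇑T) ∧ Measurable (⇑T.symm) ∧
    MeasurePreserving (⇑T) μ μ ∧ MeasurePreserving (⇑T.symm) μ μ ∧
    ∃ B : Set X, MeasurableSet B ∧ 0 < μ B ∧
      ∀ n : ℤ, (⋂ i ∈ Finset.range (d + 1), (⇑(T ^ ((i : ℤ) * n)))⁻¹' B).Nonempty → P n

lemma good_mono {d : ℕ} {P Q : ℤ → Prop} (h : Good d P) (hPQ : ∀ n, P n → Q n) : Good d Q := by
  obtain ⟨X, mX, μ, pm, T, h1, h2, h3, h4, B, hB, hBpos, hkey⟩ := h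
  exact ⟨X, mX, μ, pm, T, h1, h2, h3, h4, B, hB, hBpos, fun n hn => hPQ n (hkey n hn)⟩

lemma good_trivial {d : ℕ} {P : ℤ → Prop} (h : ∀ n, P n) : Good d P := by
  refine ⟨Unit, inferInstance, Measure.dirac (), inferInstance, 1,
    ?_, ?_, ?_, ?_, Set.univ, MeasurableSet.univ, by simp, fun n _ => h n⟩
  · exact measurable_of_subsingleton_codomain _
  · exact measurable_of_subsingleton_codomain _
  · exact ⟨measurable_of_subsingleton_codomain _, by simp [Measure.map_dirac' (measurable_of_subsingleton_codomain _)]⟩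
  · exact ⟨measurable_of_subsingleton_codomain _, by simp [Measure.map_dirac' (measurable_of_subsingleton_codomain _)]⟩

lemma prodCongr_zpow_apply {α β : Type} (S : Equiv.Perm α) (T : Equiv.Perm β) (m : ℤ)
    (p : α × β) : ((S.prodCongr T) ^ m) p = ((S ^ m) p.1, (T ^ m) p.2) := by
  induction m using Int.induction_on with
  | zero => simp
  | succ i ih =>
    rw [perm_zpow_succ, perm_zpow_succ, perm_zpow_succ, ih]
    rfl
  | pred i ih =>
    rw [show (-(i:ℤ) - 1) = (-(i:ℤ)) - 1 from rfl, perm_zpow_pred, perm_zpow_pred,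
      perm_zpow_pred, ih, Equiv.prodCongr_symm]
    rfl

lemma good_and {d : ℕ} {P Q : ℤ → Prop} (hP : Good d P) (hQ : Good d Q) :
    Good d (fun n => P n ∧ Q n) := by
  obtain ⟨X, mX, μ, pm, S, h1, h2, h3, h4, B, hB, hBpos, hkey⟩ := hP
  obtain ⟨Y, mY, ν, pν, T, g1, g2, g3, g4, C, hC, hCpos, gkey⟩ := hQ
  refine ⟨X × Y, inferInstance, μ.prod ν, inferInstance, S.prodCongr T, ?_, ?_, ?_, ?_,
    B ×ˢ C, hB.prod hC, ?_, ?_⟩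
  · exact (h1.comp measurable_fst).prodMk (g1.comp measurable_snd)
  · rw [Equiv.prodCongr_symm]
    exact (h2.comp measurable_fst).prodMk (g2.comp measurable_snd)
  · exact h3.prod g3
  · rw [Equiv.prodCongr_symm]
    exact h4.prod g4
  · rw [Measure.prod_prod]
    exact ENNReal.mul_pos hBpos.ne' hCpos.ne'
  · rintro n ⟨⟨x, y⟩, hxy⟩
    simp only [Set.mem_iInter, Set.mem_preimage] at hxy
    have hx : ∀ i ∈ Finset.range (d+1), ((S ^ ((i:ℤ)*n)) x) ∈ B := by
      intro i hi
      have := hxy i hi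
      rw [prodCongr_zpow_apply] at this
      exact this.1
    have hy : ∀ i ∈ Finset.range (d+1), ((T ^ ((i:ℤ)*n)) y) ∈ C := by
      intro i hi
      have := hxy i hi
      rw [prodCongr_zpow_apply] at this
      exact this.2
    constructor
    · exact hkey n ⟨x, by simp only [Set.mem_iInter, Set.mem_preimage]; exact hx⟩
    · exact gkey n ⟨y, by simp only [Set.mem_iInter, Set.mem_preimage]; exact hy⟩

lemma good_forall {d : ℕ} {ι : Type*} (s : Finset ι) (P : ι → ℤ → Prop)
    (h : ∀ i ∈ s, Good d (P i)) : Good d (fun n => ∀ i ∈ s, P i n) := by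
  classical
  induction s using Finset.cons_induction with
  | empty => exact good_trivial (by simp)
  | cons a s ha ih =>
    have h1 := h a (Finset.mem_cons_self a s)
    have h2 := ih (fun i hi => h i (Finset.mem_cons_of_mem hi))
    refine good_mono (good_and h1 h2) ?_
    intro n ⟨hPa, hPs⟩ i hi
    rcases Finset.mem_cons.mp hi with rfl | hi
    · exact hPa
    · exact hPs i hi


lemma good_monomial (d j : ℕ) (hj1 : 1 ≤ j) (hjd : j ≤ d) (c δ : ℝ) (hδ : 0 < δ) :
    Good d (fun n => distToInt (c * (n:ℝ) ^ j) < δ) := by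
  obtain ⟨W⟩ := towerExists j hj1 c
  letI := W.mX
  haveI := W.prob
  have h2j : (0:ℝ) < 2 ^ j := by positivity
  obtain ⟨B, hB, hBpos, hBsmall⟩ := W.small (δ / 2 ^ j) (by positivity)
  refine ⟨W.X, W.mX, W.μ, W.prob, W.T, W.measT, W.measTs, W.mpT, W.mpTs,
    B, hB, hBpos, ?_⟩
  rintro n ⟨x, hx⟩
  simp only [Set.mem_iInter, Set.mem_preimage] at hx
  set u : ℤ → 𝕋 := fun t => W.f ((W.T ^ t) x) with hu
  have hb : ∀ i : ℕ, i ≤ j → ‖u ((i:ℤ) * n)‖ < δ / 2 ^ j := by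
    intro i hi
    exact hBsmall _ (hx i (Finset.mem_range.mpr (Nat.lt_succ_of_le (hi.trans hjd))))
  have h2 := diff_pow_norm_bound j n u (δ / 2 ^ j) hb
  have h3 : (Diff n)^[j] u = fun _ => ((n ^ j : ℤ)) • ((c : 𝕋)) :=
    diff_pow_of_diff_one_pow (W.key x) n
  rw [h3] at h2
  have h4 : ((n ^ j : ℤ)) • ((c : 𝕋)) = ((c * (n:ℝ) ^ j : ℝ) : 𝕋) := by
    have : ((n ^ j : ℤ)) • ((c : 𝕋)) = ((((n ^ j : ℤ)) • c : ℝ) : 𝕋) := rfl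
    rw [this]
    congr 1
    push_cast [zsmul_eq_mul]
    ring
  rw [h4] at h2
  rw [distToInt_eq_norm]
  calc ‖((c * (n:ℝ) ^ j : ℝ) : 𝕋)‖ < 2 ^ j * (δ / 2 ^ j) := h2
    _ = δ := by field_simp

theorem stmt_10 (d : ℕ) (hd : 1 ≤ d) (k : ℕ) (hk : 1 ≤ k)
    (q : Fin k → Polynomial ℝ) (hdeg : ∀ i, (q i).natDegree ≤ d)
    (hq0 : ∀ i, (q i).eval 0 = 0) (ε : Fin k → ℝ) (hε : ∀ i, 0 < ε i) :
    ∃ (X : Type) (_ : MeasurableSpace X) (μ : Measure X)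
      (_ : IsProbabilityMeasure μ) (T : Equiv.Perm X),
      Measurable (⇑T) ∧ Measurable (⇑T.symm) ∧
      MeasurePreserving (⇑T) μ μ ∧ MeasurePreserving (⇑T.symm) μ μ ∧
      ∃ B : Set X, MeasurableSet B ∧ 0 < μ B ∧
        ∀ n : ℤ,
          0 < μ (⋂ i ∈ Finset.range (d + 1), (⇑(T ^ ((i : ℤ) * n)))⁻¹' B) →
          ∀ i, distToInt ((q i).eval (n : ℝ)) < ε i := by
  -- first, build a `Good` system for the conjunction over all `i`
  have key : Good d (fun n => ∀ i ∈ (Finset.univ : Finset (Fin k)),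
      distToInt ((q i).eval (n:ℝ)) < ε i) := by
    apply good_forall
    intro i _
    -- for each polynomial, combine the monomial systems
    have hmono : Good d (fun n => ∀ j ∈ Finset.range (d+1),
        distToInt ((q i).coeff j * (n:ℝ) ^ j) < ε i / (d+1)) := by
      apply good_forall
      intro j hj
      rcases Nat.eq_zero_or_pos j with rfl | hj1
      · apply good_trivial
        intro n
        have : (q i).coeff 0 = 0 := by
          rw [Polynomial.coeff_zero_eq_eval_zero, hq0 i]
        rw [this, zero_mul, distToInt_zero]
        have := hε i
        positivity
      · exact good_monomial d j hj1 (Nat.lt_succ_iff.mp (Finset.mem_range.mp hj)) _ _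
          (by have := hε i; positivity)
    refine good_mono hmono ?_
    intro n hn
    have hev : (q i).eval ((n:ℤ):ℝ) =
        ∑ j ∈ Finset.range (d+1), (q i).coeff j * ((n:ℤ):ℝ) ^ j :=
      Polynomial.eval_eq_sum_range' (Nat.lt_succ_of_le (hdeg i)) _
    rw [hev]
    calc distToInt (∑ j ∈ Finset.range (d+1), (q i).coeff j * ((n:ℤ):ℝ) ^ j)
        ≤ ∑ j ∈ Finset.range (d+1), distToInt ((q i).coeff j * ((n:ℤ):ℝ) ^ j) :=
          distToInt_sum_le _ _
      _ < ∑ _j ∈ Finset.range (d+1), (ε i / (d+1)) := by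
          apply Finset.sum_lt_sum_of_nonempty (by simp)
          intro j hj
          exact hn j hj
      _ = ε i := by
          rw [Finset.sum_const, Finset.card_range, nsmul_eq_mul]
          field_simp
          push_cast; ring
  obtain ⟨X, mX, μ, pm, T, h1, h2, h3, h4, B, hB, hBpos, hkey⟩ := key
  refine ⟨X, mX, μ, pm, T, h1, h2, h3, h4, B, hB, hBpos, ?_⟩
  intro n hn i
  have hne : (⋂ i ∈ Finset.range (d + 1), (⇑(T ^ ((i : ℤ) * n)))⁻¹' B).Nonempty := by
    rw [Set.nonempty_iff_ne_empty]
    intro hemp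
    rw [hemp] at hn
    simp at hn
  exact hkey n hne i (Finset.mem_univ i)
end

section
/- Let r, t ∈ ℕ, p ∈ GP_r and q ∈ GP_t. Then (1) the function n ↦ p(n)⌈q(n)⌉ is ≃_{r+t}-equivalent to the function n ↦ (p(n) − ⌈p(n)⌉)·q(n); and (2) if q₁, …, q_k ∈ GP_t satisfy q(n) = Σ_{i=1}^k q_i(n) for all n, then the function n ↦ p(n)⌈q(n)⌉ is ≃_{r+t}-equivalent to the function n ↦ Σ_{i=1}^k p(n)⌈q_i(n)⌉. -/
/-- `⌈a⌉`: the least integer `m` with `|a − m| = ‖a‖`. -/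
noncomputable def nint (a : ℝ) : ℤ := sInf { m : ℤ | |a - (m : ℝ)| = distToInt a }

/-- The class `GP d` of generalized polynomials `ℤ → ℝ` of degree `≤ d`:
`GP 1` is generated by the maps `n ↦ a·n`; each `GP d` contains `GP e` for `e < d` and
the functions `n ↦ a₀ n^{p₀} ⌈f₁(n)⌉⋯⌈f_k(n)⌉` with `f_l ∈ GP (p l)` and
`p₀ + Σ p_l = d`; and each `GP d` is closed under `⌈·⌉`, scalar multiples and sums.
(No constructor produces `GP 0`, so the degrees `p l` are automatically `≥ 1`.) -/
inductive GP : ℕ → (ℤ → ℝ) → Prop where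
  | base (a : ℝ) : GP 1 (fun n => a * (n : ℝ))
  | incl {d e : ℕ} {f : ℤ → ℝ} (hf : GP e f) (hed : e < d) : GP d f
  | mono {d : ℕ} (a₀ : ℝ) (p₀ k : ℕ) (p : Fin k → ℕ) (f : Fin k → ℤ → ℝ)
      (hf : ∀ l, GP (p l) (f l)) (hsum : p₀ + ∑ l, p l = d) (hd : 1 ≤ d) :
      GP d (fun n => a₀ * (n : ℝ) ^ p₀ * ∏ l, (nint (f l n) : ℝ))
  | ceil {d : ℕ} {f : ℤ → ℝ} (hf : GP d f) : GP d (fun n => (nint (f n) : ℝ))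
  | smul {d : ℕ} {f : ℤ → ℝ} (c : ℝ) (hf : GP d f) : GP d (fun n => c * f n)
  | add {d : ℕ} {f g : ℤ → ℝ} (hf : GP d f) (hg : GP d g) : GP d (fun n => f n + g n)

/-- `L(a₁,…,a_ℓ)`: `L(a₁) = a₁` and `L(a₁,a₂,…,a_ℓ) = a₁⌈L(a₂,…,a_ℓ)⌉`. -/
noncomputable def Lfun : List ℝ → ℝ
  | [] => 0
  | [a] => a
  | a :: b :: rest => a * (nint (Lfun (b :: rest)) : ℝ)

/-- The class `SGP d` of special generalized polynomials of degree `≤ d`: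
the functions `n ↦ L(n^{j₁}a₁,…,n^{j_ℓ}a_ℓ)` with `1 ≤ ℓ ≤ d`, `j_t ≥ 1`, `Σ j_t ≤ d`. -/
def SGP (d : ℕ) (f : ℤ → ℝ) : Prop :=
  ∃ (ℓ : ℕ) (a : Fin ℓ → ℝ) (j : Fin ℓ → ℕ),
    1 ≤ ℓ ∧ ℓ ≤ d ∧ (∀ t, 1 ≤ j t) ∧ (∑ t, j t) ≤ d ∧
    f = fun n : ℤ => Lfun (List.ofFn fun t => (n : ℝ) ^ (j t) * a t)

/-- The family `F_{GP_d}` of subsets of `ℤ` containing some set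
`⋂_{i=1}^k {n : ‖P_i(n)‖ < ε_i}` with `P_i ∈ GP d` and `ε_i > 0`. -/
def FGP (d : ℕ) : Set (Set ℤ) :=
  { A | ∃ (k : ℕ) (P : Fin k → ℤ → ℝ) (ε : Fin k → ℝ),
      1 ≤ k ∧ (∀ i, GP d (P i)) ∧ (∀ i, 0 < ε i) ∧
      (⋂ i, { n : ℤ | distToInt (P i n) < ε i }) ⊆ A }

/-- The family `F_{SGP_d}`, defined like `F_{GP_d}` with `SGP d` in place of `GP d`. -/
def FSGP (d : ℕ) : Set (Set ℤ) :=
  { A | ∃ (k : ℕ) (P : Fin k → ℤ → ℝ) (ε : Fin k → ℝ),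
      1 ≤ k ∧ (∀ i, SGP d (P i)) ∧ (∀ i, 0 < ε i) ∧
      (⋂ i, { n : ℤ | distToInt (P i n) < ε i }) ⊆ A }

/-- `SW d`: the functions `n ↦ ∏_{i=1}^ℓ (w_i(n) − ⌈w_i(n)⌉)` with `ℓ ≥ 2`, `r_i ≥ 1`,
`w_i ∈ GP (r i)` and `r₁+⋯+r_ℓ ≤ d`. -/
def SW (d : ℕ) (g : ℤ → ℝ) : Prop :=
  ∃ (ℓ : ℕ) (r : Fin ℓ → ℕ) (w : Fin ℓ → ℤ → ℝ),
    2 ≤ ℓ ∧ (∀ i, 1 ≤ r i) ∧ (∀ i, GP (r i) (w i)) ∧ (∑ i, r i) ≤ d ∧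
    g = fun n : ℤ => ∏ i, (w i n - (nint (w i n) : ℝ))

/-- `W d`: finite real linear combinations of functions in `SW d`. -/
def Wset (d : ℕ) : Set (ℤ → ℝ) :=
  { p | ∃ (m : ℕ) (c : Fin m → ℝ) (g : Fin m → ℤ → ℝ),
      1 ≤ m ∧ (∀ j, SW d (g j)) ∧ p = fun n : ℤ => ∑ j, c j * g j n }

/-- `q₁ ≃_d q₂`: there exist `h₁ ∈ GP (d−1)` and `h₂ ∈ W d` with
`q₂(n) − q₁(n) − h₁(n) − h₂(n) ∈ ℤ` for every `n`. -/
def GPequiv (d : ℕ) (q₁ q₂ : ℤ → ℝ) : Prop :=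
  ∃ h₁ h₂ : ℤ → ℝ, GP (d - 1) h₁ ∧ h₂ ∈ Wset d ∧
    ∀ n : ℤ, ∃ m : ℤ, q₂ n - q₁ n - h₁ n - h₂ n = (m : ℝ)


lemma distToInt_eq_abs_sub_round (a : ℝ) : distToInt a = |a - round a| := by
  apply le_antisymm
  · refine csInf_le ⟨0, ?_⟩ (Set.mem_range.2 ⟨round a, rfl⟩)
    rintro x ⟨m, rfl⟩; exact abs_nonneg _
  · refine le_csInf ⟨|a - (round a : ℝ)|, Set.mem_range.2 ⟨round a, rfl⟩⟩ ?_
    rintro x ⟨m, rfl⟩; exact round_le a m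

lemma nint_set_isLeast (a : ℝ) :
    IsLeast { m : ℤ | |a - (m : ℝ)| = distToInt a } (nint a) := by
  set S := { m : ℤ | |a - (m : ℝ)| = distToInt a } with hS
  have hne : round a ∈ S := (distToInt_eq_abs_sub_round a).symm
  have hbdd : BddBelow S := by
    refine ⟨round a - 1, fun m hm => ?_⟩
    have h1 : |a - (m : ℝ)| ≤ 1 / 2 := by
      rw [hm, distToInt_eq_abs_sub_round]; exact abs_sub_round a
    have h2 : |a - (round a : ℝ)| ≤ 1 / 2 := abs_sub_round a
    have h3 : ((round a : ℤ) : ℝ) - 1 ≤ (m : ℝ) := by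
      have := abs_le.1 h1
      have := abs_le.1 h2
      linarith
    exact_mod_cast h3
  exact ⟨Int.csInf_mem ⟨_, hne⟩ hbdd, fun m hm => csInf_le hbdd hm⟩

lemma distToInt_add_int (a : ℝ) (k : ℤ) : distToInt (a + k) = distToInt a := by
  unfold distToInt
  congr 1
  ext x
  constructor
  · rintro ⟨m, rfl⟩; exact ⟨m - k, by push_cast; ring_nf⟩
  · rintro ⟨m, rfl⟩; exact ⟨m + k, by push_cast; ring_nf⟩

lemma nint_add_int (a : ℝ) (k : ℤ) : nint (a + k) = nint a + k := by
  have hmem : ∀ m : ℤ, |a + (k : ℝ) - (m : ℝ)| = distToInt (a + k) ↔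
      |a - ((m - k : ℤ) : ℝ)| = distToInt a := by
    intro m
    rw [distToInt_add_int]
    constructor <;> intro h <;> [skip; skip] <;>
      · rw [← h]; congr 1; push_cast; ring
  have hL := nint_set_isLeast a
  have hLk : IsLeast { m : ℤ | |a + (k : ℝ) - (m : ℝ)| = distToInt (a + k) } (nint a + k) := by
    constructor
    · show |a + (k : ℝ) - _| = _
      rw [hmem]; simpa using hL.1
    · intro m hm
      have := hL.2 ((hmem m).1 hm)
      omega
  simpa [nint] using hLk.csInf_eq

lemma GP_congr {d : ℕ} {f g : ℤ → ℝ} (h : GP d f) (hfg : ∀ n, f n = g n) : GP d g :=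
  (funext hfg) ▸ h

lemma gp_zero (d : ℕ) (hd : 1 ≤ d) : GP d (fun _ : ℤ => (0 : ℝ)) := by
  have h1 : GP 1 (fun _ : ℤ => (0 : ℝ)) := GP_congr (GP.base 0) (fun n => by ring)
  rcases lt_or_eq_of_le hd with h | h
  · exact GP.incl h1 h
  · exact h ▸ h1

lemma gp_sum {d : ℕ} (hd : 1 ≤ d) : ∀ {k : ℕ} (f : Fin k → ℤ → ℝ), (∀ i, GP d (f i)) →
    GP d (fun n => ∑ i, f i n) := by
  intro k
  induction k with
  | zero => intro f _; exact GP_congr (gp_zero d hd) (by simp)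
  | succ k ih =>
    intro f hf
    exact GP_congr (GP.add (hf 0) (ih (fun i => f i.succ) (fun i => hf i.succ)))
      (fun n => by simp [Fin.sum_univ_succ])

lemma sw_pair {r t : ℕ} (hr : 1 ≤ r) (ht : 1 ≤ t) {p q : ℤ → ℝ}
    (hp : GP r p) (hq : GP t q) :
    SW (r + t) (fun n => (p n - (nint (p n) : ℝ)) * (q n - (nint (q n) : ℝ))) := by
  refine ⟨2, ![r, t], ![p, q], le_refl 2, ?_, ?_, ?_, ?_⟩
  · intro i; fin_cases i <;> simpa
  · intro i; fin_cases i <;> simpa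
  · simp [Fin.sum_univ_two]
  · funext n; simp [Fin.prod_univ_two]

lemma gpequiv_part1 (r t : ℕ) (hr : 1 ≤ r) (ht : 1 ≤ t)
    (p q : ℤ → ℝ) (hp : GP r p) (hq : GP t q) :
    GPequiv (r + t) (fun n => p n * (nint (q n) : ℝ))
      (fun n => (p n - (nint (p n) : ℝ)) * q n) := by
  refine ⟨fun _ => 0,
    fun n => (p n - (nint (p n) : ℝ)) * (q n - (nint (q n) : ℝ)), ?_, ?_, ?_⟩
  · exact gp_zero _ (by omega)
  · exact ⟨1, fun _ => 1, fun _ => fun n => (p n - (nint (p n) : ℝ)) * (q n - (nint (q n) : ℝ)),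
      le_refl 1, fun _ => sw_pair hr ht hp hq, by funext n; simp⟩
  · intro n
    exact ⟨-(nint (p n) * nint (q n)), by push_cast; ring⟩

theorem stmt_14 (r t : ℕ) (hr : 1 ≤ r) (ht : 1 ≤ t)
    (p q : ℤ → ℝ) (hp : GP r p) (hq : GP t q) :
    GPequiv (r + t) (fun n => p n * (nint (q n) : ℝ))
      (fun n => (p n - (nint (p n) : ℝ)) * q n) ∧
    ∀ (k : ℕ) (qi : Fin k → ℤ → ℝ), (∀ i, GP t (qi i)) →
      (∀ n, q n = ∑ i, qi i n) →
      GPequiv (r + t) (fun n => p n * (nint (q n) : ℝ))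
        (fun n => ∑ i, p n * (nint (qi i n) : ℝ)) := by
  constructor
  · exact gpequiv_part1 r t hr ht p q hp hq
  · intro k qi hqi hsum
    set g : ℤ → ℝ := fun n => ∑ i, (qi i n - (nint (qi i n) : ℝ)) with hg_def
    have hg : GP t g := by
      refine gp_sum ht _ (fun i => ?_)
      exact GP_congr (GP.add (hqi i) (GP.smul (-1) (GP.ceil (hqi i)))) (fun n => by ring)
    have hQ : ∀ n, nint (q n) = nint (g n) + ∑ i, nint (qi i n) := by
      intro n
      have hqn : q n = g n + ((∑ i, nint (qi i n) : ℤ) : ℝ) := by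
        rw [hsum n, hg_def]
        push_cast
        rw [Finset.sum_sub_distrib]
        ring
      rw [hqn, nint_add_int]
    refine ⟨fun _ => 0,
      fun n => (p n - (nint (p n) : ℝ)) * (g n - (nint (g n) : ℝ))
        - (p n - (nint (p n) : ℝ)) * g n, ?_, ?_, ?_⟩
    · exact gp_zero _ (by omega)
    · refine ⟨k + 1, Fin.cons 1 (fun _ => -1),
        Fin.cons (fun n => (p n - (nint (p n) : ℝ)) * (g n - (nint (g n) : ℝ)))
          (fun i => fun n => (p n - (nint (p n) : ℝ)) * (qi i n - (nint (qi i n) : ℝ))),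
        by omega, ?_, ?_⟩
      · intro j
        refine Fin.cases ?_ ?_ j
        · simpa using sw_pair hr ht hp hg
        · intro i; simpa using sw_pair hr ht hp (hqi i)
      · funext n
        rw [Fin.sum_univ_succ]
        simp only [Fin.cons_zero, Fin.cons_succ]
        have hfac : ∑ i : Fin k, (-1 : ℝ) *
            ((p n - (nint (p n) : ℝ)) * (qi i n - (nint (qi i n) : ℝ)))
            = -((p n - (nint (p n) : ℝ)) * g n) := by
          rw [hg_def]
          rw [Finset.mul_sum, ← Finset.sum_neg_distrib]
          refine Finset.sum_congr rfl (fun i _ => by ring)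
        rw [hfac]
        ring
    · intro n
      refine ⟨-(nint (p n) * nint (g n)), ?_⟩
      have hQn : ((nint (q n) : ℤ) : ℝ)
          = (nint (g n) : ℝ) + ((∑ i, nint (qi i n) : ℤ) : ℝ) := by
        rw [hQ n]; push_cast; ring
      have hps : ∑ i, p n * (nint (qi i n) : ℝ) = p n * ((∑ i, nint (qi i n) : ℤ) : ℝ) := by
        rw [← Finset.mul_sum]; push_cast; ring
      simp only [hps, hQn]
      push_cast
      ring
end

section
/- Let E ⊆ ℤ be a syndetic set. Then there exist a nonempty compact metric space X, a homeomorphism T : X → X such that every orbit {Tⁿx : n ∈ ℤ} is dense in X, and a nonempty open set U ⊆ X such that for every nonempty finite set α ⊆ ℤ: if ⋂_{n∈α} T^{−n}U ≠ ∅ then ⋂_{n∈α} (E − n) ≠ ∅. -/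
/-- `E ⊆ ℤ` is syndetic: there is `N` such that every interval of `N` consecutive
integers meets `E`. -/
def Syndetic (E : Set ℤ) : Prop :=
  ∃ N : ℕ, ∀ i : ℤ, ∃ j ∈ E, i ≤ j ∧ j < i + N

namespace Stmt16Aux

/-- The shift map on `ℤ → Bool`. -/
def shift : Equiv.Perm (ℤ → Bool) where
  toFun y n := y (n + 1)
  invFun y n := y (n - 1)
  left_inv y := funext fun n => by simp
  right_inv y := funext fun n => by simp

lemma shift_zpow : ∀ (n : ℤ) (y : ℤ → Bool) (j : ℤ), (shift ^ n) y j = y (j + n) := by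
  have key : ∀ (n : ℕ) (y : ℤ → Bool) (j : ℤ),
      ((shift ^ (n : ℤ)) y j = y (j + n)) ∧ ((shift ^ (-(n : ℤ))) y j = y (j - n)) := by
    intro n
    induction n with
    | zero => intro y j; simp
    | succ k ih =>
      intro y j
      constructor
      · have h1 : ((k : ℤ) + 1) = (((k + 1 : ℕ) : ℤ)) := by push_cast; ring
        rw [← h1, zpow_add_one, Equiv.Perm.mul_apply, (ih _ _).1]
        show y (j + k + 1) = _
        exact congrArg y (by omega)
      · have h1 : (-(((k + 1 : ℕ) : ℤ))) = (-(k : ℤ)) - 1 := by push_cast; ring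
        rw [h1, zpow_sub_one, Equiv.Perm.mul_apply, (ih _ _).2]
        have h2 : (shift⁻¹ y) = fun n => y (n - 1) := rfl
        rw [h2]
        show y (j + -(k : ℤ) - 1) = _
        exact congrArg y (by omega)
  intro n y j
  rcases le_or_gt 0 n with h | h
  · obtain ⟨m, rfl⟩ := Int.eq_ofNat_of_zero_le h
    exact (key m y j).1
  · obtain ⟨m, rfl⟩ : ∃ m : ℕ, n = -(m : ℤ) := ⟨n.natAbs, by omega⟩
    rw [(key m y j).2, Int.sub_eq_add_neg]

lemma shift_zpow_add (a b : ℤ) (y : ℤ → Bool) :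
    (shift ^ (a + b)) y = (shift ^ a) ((shift ^ b) y) := by
  funext j
  rw [shift_zpow, shift_zpow, shift_zpow]
  congr 1; ring

lemma continuous_shift : Continuous (⇑shift) :=
  continuous_pi fun n => continuous_apply (n + 1)

lemma continuous_shift_symm : Continuous (⇑shift.symm) :=
  continuous_pi fun n => continuous_apply (n - 1)

/-- `shift` as a homeomorphism. -/
def shiftHomeo : (ℤ → Bool) ≃ₜ (ℤ → Bool) :=
  ⟨shift, continuous_shift, continuous_shift_symm⟩

lemma preimage_range_orbit (y : ℤ → Bool) :
    shift ⁻¹' (Set.range fun n : ℤ => (shift ^ n) y) = Set.range fun n : ℤ => (shift ^ n) y := by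
  ext z
  simp only [Set.mem_preimage, Set.mem_range]
  constructor
  · rintro ⟨m, hm⟩
    refine ⟨m - 1, ?_⟩
    have : (shift ^ (-1 : ℤ)) ((shift ^ m) y) = (shift ^ (-1 : ℤ)) (shift z) := by rw [hm]
    rw [← shift_zpow_add] at this
    have h2 : (shift ^ (-1 : ℤ)) (shift z) = z := by
      have : shift z = (shift ^ (1 : ℤ)) z := by rw [zpow_one]
      rw [this, ← shift_zpow_add]; simp
    rw [h2] at this
    convert this using 2; ring
  · rintro ⟨m, rfl⟩
    refine ⟨m + 1, ?_⟩
    rw [add_comm, shift_zpow_add, zpow_one]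

lemma inv_closure_orbit (y : ℤ → Bool) :
    shift ⁻¹' (closure (Set.range fun n : ℤ => (shift ^ n) y)) =
      closure (Set.range fun n : ℤ => (shift ^ n) y) := by
  have h1 := shiftHomeo.preimage_closure (Set.range fun n : ℤ => (shift ^ n) y)
  have h2 : ⇑shiftHomeo ⁻¹' (Set.range fun n : ℤ => (shift ^ n) y) =
      Set.range fun n : ℤ => (shift ^ n) y := preimage_range_orbit y
  show ⇑shiftHomeo ⁻¹' _ = _
  rw [h1, h2]

lemma mem_of_inv {K : Set (ℤ → Bool)} (hK : shift ⁻¹' K = K) :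
    ∀ (n : ℤ) (y : ℤ → Bool), y ∈ K → (shift ^ n) y ∈ K := by
  have step : ∀ y, y ∈ K ↔ shift y ∈ K := by
    intro y; constructor
    · intro h; rw [← hK] at h; exact h
    · intro h; rw [← hK]; exact h
  have key : ∀ (n : ℕ) (y : ℤ → Bool), y ∈ K →
      ((shift ^ (n : ℤ)) y ∈ K ∧ (shift ^ (-(n : ℤ))) y ∈ K) := by
    intro n
    induction n with
    | zero => intro y hy; refine ⟨?_, ?_⟩ <;> simpa using hy
    | succ k ih =>
      intro y hy
      constructor
      · have h1 : (((k + 1 : ℕ) : ℤ)) = (k : ℤ) + 1 := by push_cast; ring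
        rw [h1, shift_zpow_add, zpow_one]
        exact (ih _ ((step y).1 hy)).1
      · have h1 : (-((k + 1 : ℕ) : ℤ)) = (-(k : ℤ)) + (-1) := by push_cast; ring
        rw [h1, shift_zpow_add]
        refine (ih _ ?_).2
        have h2 : (shift ^ (-1 : ℤ)) y = shift.symm y := by
          rw [zpow_neg_one]; rfl
        rw [h2]
        have := (step (shift.symm y)).2
        simp only [Equiv.apply_symm_apply] at this
        exact this hy
  intro n y hy
  rcases le_or_gt 0 n with h | h
  · obtain ⟨m, rfl⟩ := Int.eq_ofNat_of_zero_le h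
    exact (key m y hy).1
  · obtain ⟨m, rfl⟩ : ∃ m : ℕ, n = -(m : ℤ) := ⟨n.natAbs, by omega⟩
    exact (key m y hy).2

end Stmt16Aux

open Stmt16Aux in
theorem stmt_16 (E : Set ℤ) (hE : Syndetic E) :
    ∃ (X : Type) (_ : MetricSpace X) (_ : CompactSpace X) (_ : Nonempty X)
      (T : Equiv.Perm X),
      Continuous (⇑T) ∧ Continuous (⇑T.symm) ∧
      (∀ x : X, Dense (Set.range fun n : ℤ => (T ^ n) x)) ∧
      ∃ U : Set X, IsOpen U ∧ U.Nonempty ∧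
        ∀ α : Finset ℤ, α.Nonempty →
          (⋂ n ∈ α, (⇑(T ^ n))⁻¹' U).Nonempty →
          (⋂ n ∈ α, { m : ℤ | m + n ∈ E }).Nonempty := by
  classical
  obtain ⟨N, hN⟩ := hE
  set e : ℤ → Bool := fun n => if n ∈ E then true else false with he
  set K₀ : Set (ℤ → Bool) := closure (Set.range fun m : ℤ => (shift ^ m) e) with hK₀
  set S : Set (Set (ℤ → Bool)) :=
    {K | K.Nonempty ∧ IsClosed K ∧ K ⊆ K₀ ∧ shift ⁻¹' K = K} with hS
  have hK₀S : K₀ ∈ S := by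
    refine ⟨⟨e, subset_closure ⟨0, by simp⟩⟩, isClosed_closure, le_refl _, ?_⟩
    exact inv_closure_orbit e
  -- Zorn: minimal element of S
  obtain ⟨K, -, hKmin⟩ : ∃ K ⊆ K₀, Minimal (· ∈ S) K := by
    apply zorn_superset_nonempty
    · intro c hcS hchain hcne
      refine ⟨⋂₀ c, ⟨?_, ?_, ?_, ?_⟩, fun s hs => Set.sInter_subset_of_mem hs⟩
      · haveI : Nonempty c := hcne.to_subtype
        apply IsCompact.nonempty_sInter_of_directed_nonempty_isCompact_isClosed
        · intro a ha b hb
          rcases hchain.total ha hb with h | h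
          · exact ⟨a, ha, Set.Subset.rfl, h⟩
          · exact ⟨b, hb, h, Set.Subset.rfl⟩
        · exact fun U hU => (hcS hU).1
        · exact fun U hU => (hcS hU).2.1.isCompact
        · exact fun U hU => (hcS hU).2.1
      · exact isClosed_sInter fun U hU => (hcS hU).2.1
      · obtain ⟨s, hs⟩ := hcne
        exact (Set.sInter_subset_of_mem hs).trans (hcS hs).2.2.1
      · rw [Set.preimage_sInter]
        rw [Set.sInter_eq_biInter]
        exact Set.iInter₂_congr fun s hs => (hcS hs).2.2.2
    · exact hK₀S
  obtain ⟨⟨hKne, hKcl, hKsub, hKinv⟩, hmin⟩ := hKmin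
  have hmemiff : ∀ y : ℤ → Bool, y ∈ K ↔ shift y ∈ K := by
    intro y
    conv_lhs => rw [← hKinv]
    rfl
  -- The subsystem
  set X : Type := {y : ℤ → Bool // y ∈ K} with hX
  haveI : TopologicalSpace.MetrizableSpace X := by infer_instance
  letI m : MetricSpace X := TopologicalSpace.metrizableSpaceMetric X
  haveI hcs : CompactSpace X := isCompact_iff_compactSpace.1 (hKcl.isCompact)
  haveI hne : Nonempty X := hKne.to_subtype
  set T : Equiv.Perm X := shift.subtypePerm (fun y => (hmemiff y).symm) with hT
  have hTz : ∀ (n : ℤ) (x : X), (((T ^ n) x : ℤ → Bool)) = (shift ^ n) (x : ℤ → Bool) := by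
    intro n x
    rw [hT, Equiv.Perm.subtypePerm_zpow]
    rfl
  refine ⟨X, m, hcs, hne, T, ?_, ?_, ?_, ?_⟩
  · exact continuous_induced_rng.2 (continuous_shift.comp continuous_subtype_val)
  · exact continuous_induced_rng.2 (continuous_shift_symm.comp continuous_subtype_val)
  · -- minimality: every orbit is dense
    intro x
    rw [dense_iff_closure_eq, Set.eq_univ_iff_forall]
    intro y
    rw [closure_subtype]
    have himg : Subtype.val '' (Set.range fun n : ℤ => (T ^ n) x) =
        Set.range fun n : ℤ => (shift ^ n) (x : ℤ → Bool) := by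
      rw [← Set.range_comp]
      exact congrArg _ (funext fun n => hTz n x)
    rw [himg]
    set L : Set (ℤ → Bool) := closure (Set.range fun n : ℤ => (shift ^ n) (x : ℤ → Bool)) with hL
    have hLK : L ⊆ K := by
      apply closure_minimal _ hKcl
      rintro _ ⟨n, rfl⟩
      exact mem_of_inv hKinv n _ x.2
    have hLS : L ∈ S := by
      refine ⟨⟨(x : ℤ → Bool), subset_closure ⟨0, by simp⟩⟩, isClosed_closure,
        hLK.trans hKsub, inv_closure_orbit _⟩
    have : K ⊆ L := hmin hLS hLK
    exact this y.2
  · -- the open set U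
    refine ⟨{x : X | (x : ℤ → Bool) 0 = true}, ?_, ?_, ?_⟩
    · have h1 : IsOpen ((fun y : ℤ → Bool => y 0) ⁻¹' {true}) :=
        (isOpen_discrete _).preimage (continuous_apply 0)
      exact h1.preimage continuous_subtype_val
    · -- nonemptiness of U
      obtain ⟨y₀, hy₀⟩ := hKne
      -- every element of K₀ has a `true` in [0, N)
      have hA : ∀ y ∈ K₀, ∃ j : ℤ, 0 ≤ j ∧ j < N ∧ y j = true := by
        set A : Set (ℤ → Bool) := ⋃ j ∈ Finset.range N, {y : ℤ → Bool | y (j : ℤ) = true}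
          with hAdef
        have hAcl : IsClosed A := by
          apply Set.Finite.isClosed_biUnion (Finset.finite_toSet _)
          intro j _
          show IsClosed {y : ℤ → Bool | y (j : ℤ) = true}
          exact (isClosed_discrete ({true} : Set Bool)).preimage (continuous_apply (A := fun _ : ℤ => Bool) ((j : ℤ)))
        have horb : (Set.range fun m : ℤ => (shift ^ m) e) ⊆ A := by
          rintro _ ⟨m, rfl⟩
          obtain ⟨j, hjE, hj1, hj2⟩ := hN m
          have hjm : 0 ≤ j - m ∧ j - m < N := by omega
          refine Set.mem_biUnion (Finset.mem_range.2 (by omega : (j - m).toNat < N)) ?_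
          show (shift ^ m) e (((j - m).toNat : ℤ)) = true
          rw [shift_zpow]
          have : (((j - m).toNat : ℤ)) + m = j := by omega
          rw [this, he]
          simp [hjE]
        intro y hy
        have hyA : y ∈ A := closure_minimal horb hAcl hy
        rw [hAdef] at hyA
        obtain ⟨j, hj, hyj⟩ := Set.mem_iUnion₂.1 hyA
        exact ⟨(j : ℤ), Int.natCast_nonneg j, by exact_mod_cast Finset.mem_range.1 hj, hyj⟩
      obtain ⟨j, hj0, hjN, hyj⟩ := hA y₀ (hKsub hy₀)
      refine ⟨⟨(shift ^ j) y₀, mem_of_inv hKinv j y₀ hy₀⟩, ?_⟩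
      show (shift ^ j) y₀ 0 = true
      rw [shift_zpow, zero_add]; exact hyj
    · -- intersection property
      intro α hα hxe
      obtain ⟨x, hx⟩ := hxe
      simp only [Set.mem_iInter, Set.mem_preimage] at hx
      have hx' : ∀ n ∈ α, (x : ℤ → Bool) n = true := by
        intro n hn
        have := hx n hn
        have h2 : ((T ^ n) x : ℤ → Bool) 0 = true := this
        rw [hTz, shift_zpow, zero_add] at h2
        exact h2
      set W : Set (ℤ → Bool) := ⋂ n ∈ α, {y : ℤ → Bool | y n = true} with hW
      have hWopen : IsOpen W := by
        apply isOpen_biInter_finset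
        intro n _
        show IsOpen {y : ℤ → Bool | y n = true}
        exact (isOpen_discrete ({true} : Set Bool)).preimage (continuous_apply (A := fun _ : ℤ => Bool) n)
      have hxW : (x : ℤ → Bool) ∈ W := by
        simp only [hW, Set.mem_iInter]
        exact fun n hn => hx' n hn
      have hxK₀ : (x : ℤ → Bool) ∈ K₀ := hKsub x.2
      rw [hK₀, mem_closure_iff] at hxK₀
      obtain ⟨z, hzW, m, rfl⟩ := hxK₀ W hWopen hxW
      refine ⟨m, ?_⟩
      simp only [Set.mem_iInter, Set.mem_setOf_eq]
      intro n hn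
      have := Set.mem_iInter₂.1 hzW n hn
      have h3 : (shift ^ m) e n = true := this
      rw [shift_zpow, he] at h3
      simp only at h3
      rw [add_comm]
      by_contra hcon
      simp [hcon] at h3
end

section
/- Let X be a nonempty compact metric space and T : X → X a homeomorphism such that every orbit {Tⁿx : n ∈ ℤ} is dense in X, and let U ⊆ X be a nonempty open set. Then there exists a syndetic set E ⊆ ℤ such that for every nonempty finite set α ⊆ ℤ: if ⋂_{n∈α} (E − n) ≠ ∅ then ⋂_{n∈α} T^{−n}U ≠ ∅. -/
private lemma cont_zpow {X : Type} [MetricSpace X] (T : Equiv.Perm X)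
    (hT : Continuous (⇑T)) (hT' : Continuous (⇑T.symm)) (n : ℤ) :
    Continuous (⇑(T ^ n)) := by
  induction n using Int.induction_on with
  | zero => simpa using continuous_id
  | succ k ih =>
      have : (T ^ ((k : ℤ) + 1)) = T ^ (k : ℤ) * T := by rw [zpow_add, zpow_one]
      rw [this]
      exact ih.comp hT
  | pred k ih =>
      have : (T ^ (-(k : ℤ) - 1)) = T ^ (-(k : ℤ)) * T⁻¹ := by
        rw [sub_eq_add_neg, zpow_add, zpow_neg_one]
      rw [this]
      have : ⇑(T⁻¹) = ⇑T.symm := rfl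
      exact ih.comp (this ▸ hT')

theorem stmt_17 (X : Type) [MetricSpace X] [CompactSpace X] [Nonempty X]
    (T : Equiv.Perm X) (hT : Continuous (⇑T)) (hT' : Continuous (⇑T.symm))
    (hmin : ∀ x : X, Dense (Set.range fun n : ℤ => (T ^ n) x))
    (U : Set X) (hU : IsOpen U) (hUne : U.Nonempty) :
    ∃ E : Set ℤ, Syndetic E ∧
      ∀ α : Finset ℤ, α.Nonempty →
        (⋂ n ∈ α, { m : ℤ | m + n ∈ E }).Nonempty →
        (⋂ n ∈ α, (⇑(T ^ n))⁻¹' U).Nonempty := by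
  obtain ⟨x⟩ := ‹Nonempty X›
  refine ⟨{n : ℤ | (T ^ n) x ∈ U}, ?_, ?_⟩
  · -- syndetic
    have hcover : Set.univ ⊆ ⋃ n : ℤ, (⇑(T ^ n))⁻¹' U := by
      intro y _
      obtain ⟨z, hz, hzU⟩ := (hmin y).exists_mem_open hU hUne
      obtain ⟨n, rfl⟩ := hz
      exact Set.mem_iUnion.2 ⟨n, hzU⟩
    obtain ⟨s, hs⟩ := isCompact_univ.elim_finite_subcover
      (fun n : ℤ => (⇑(T ^ n))⁻¹' U)
      (fun n => hU.preimage (cont_zpow T hT hT' n)) hcover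
    have hsne : s.Nonempty := by
      rcases Finset.eq_empty_or_nonempty s with h | h
      · exfalso
        have := hs (Set.mem_univ x)
        simp [h] at this
      · exact h
    set a := s.min' hsne
    set b := s.max' hsne
    refine ⟨(b - a).toNat + 1, fun i => ?_⟩
    have := hs (Set.mem_univ ((T ^ (i - a)) x))
    simp only [Set.mem_iUnion, Set.mem_preimage, exists_prop] at this
    obtain ⟨n, hns, hnU⟩ := this
    have key : (T ^ (n + (i - a))) x = (T ^ n) ((T ^ (i - a)) x) := by
      rw [zpow_add]; rfl
    have ha : a ≤ n := s.min'_le n hns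
    have hb : n ≤ b := s.le_max' n hns
    refine ⟨i - a + n, ?_, by omega, ?_⟩
    · show (T ^ (i - a + n)) x ∈ U
      rw [add_comm, key]; exact hnU
    · have h1 : (0 : ℤ) ≤ b - a := by omega
      have h2 : ((b - a).toNat : ℤ) = b - a := Int.toNat_of_nonneg h1
      push_cast
      omega
  · -- intersection
    intro α hα ⟨m, hm⟩
    simp only [Set.mem_iInter, Set.mem_setOf_eq] at hm
    refine ⟨(T ^ m) x, Set.mem_iInter₂.2 fun n hn => ?_⟩
    show (T ^ n) ((T ^ m) x) ∈ U
    have : (T ^ (m + n)) x = (T ^ n) ((T ^ m) x) := by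
      rw [add_comm, zpow_add]; rfl
    rw [← this]
    exact hm n hn
end

section
/- Let E ⊆ ℤ with BD*(E) > 0. Then there exist a measure-preserving system (X, 𝒳, μ, T) and a measurable set A ∈ 𝒳 with μ(A) = BD*(E) such that for every nonempty finite set α ⊆ ℤ one has BD*(⋂_{n∈α} (E − n)) ≥ μ(⋂_{n∈α} T^{−n}A). -/
open MeasureTheory Filter Set
open scoped ENNReal NNReal

/-- The upper Banach density
`BD*(S) = limsup_{N→∞} sup_{M∈ℤ} |S ∩ {M, M+1, …, M+N−1}| / N`. -/
noncomputable def upperBanachDensity (S : Set ℤ) : ℝ :=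
  Filter.limsup
    (fun N : ℕ => ⨆ M : ℤ, ((S ∩ Set.Ico M (M + (N : ℤ))).ncard : ℝ) / (N : ℝ))
    Filter.atTop

namespace FC

noncomputable section
open scoped Classical

abbrev X : Type := ℤ → Bool

/-- counting function -/
def cnt (S : Set ℤ) (M : ℤ) (N : ℕ) : ℕ := ((Finset.Ico M (M + N)).filter (· ∈ S)).card

lemma cnt_le (S : Set ℤ) (M : ℤ) (N : ℕ) : cnt S M N ≤ N := by
  calc cnt S M N ≤ (Finset.Ico M (M + N)).card := Finset.card_filter_le _ _
  _ = N := by rw [Int.card_Ico]; simp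

lemma ncard_eq_cnt (S : Set ℤ) (M : ℤ) (N : ℕ) :
    (S ∩ Set.Ico M (M + (N : ℤ))).ncard = cnt S M N := by
  have : S ∩ Set.Ico M (M + (N : ℤ)) = ↑((Finset.Ico M (M + N)).filter (· ∈ S)) := by
    ext m
    simp only [Finset.coe_filter, Finset.mem_Ico, Set.mem_inter_iff, Set.mem_Ico, Set.mem_setOf_eq]
    tauto
  rw [this, Set.ncard_coe_finset, cnt]

/-- the sup in the definition of Banach density -/
def g (S : Set ℤ) (N : ℕ) : ℝ := ⨆ M : ℤ, ((S ∩ Set.Ico M (M + (N : ℤ))).ncard : ℝ) / (N : ℝ)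

lemma uBD_eq (S : Set ℤ) : upperBanachDensity S = limsup (g S) atTop := rfl

lemma term_nonneg (S : Set ℤ) (M : ℤ) (N : ℕ) :
    0 ≤ ((S ∩ Set.Ico M (M + (N : ℤ))).ncard : ℝ) / (N : ℝ) := by positivity

lemma term_le_one (S : Set ℤ) (M : ℤ) (N : ℕ) :
    ((S ∩ Set.Ico M (M + (N : ℤ))).ncard : ℝ) / (N : ℝ) ≤ 1 := by
  rcases Nat.eq_zero_or_pos N with h | h
  · simp [h]
  · rw [div_le_one (by positivity)]
    rw [ncard_eq_cnt]
    exact_mod_cast cnt_le S M N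

lemma g_bddAbove (S : Set ℤ) (N : ℕ) :
    BddAbove (Set.range fun M : ℤ => ((S ∩ Set.Ico M (M + (N : ℤ))).ncard : ℝ) / (N : ℝ)) := by
  refine ⟨1, ?_⟩
  rintro x ⟨M, rfl⟩
  exact term_le_one S M N

lemma g_nonneg (S : Set ℤ) (N : ℕ) : 0 ≤ g S N :=
  le_trans (term_nonneg S 0 N) (le_ciSup (g_bddAbove S N) 0)

lemma g_le_one (S : Set ℤ) (N : ℕ) : g S N ≤ 1 :=
  ciSup_le fun M => term_le_one S M N

lemma cnt_div_le_g (S : Set ℤ) (M : ℤ) (N : ℕ) : (cnt S M N : ℝ) / N ≤ g S N := by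
  rw [← ncard_eq_cnt]
  exact le_ciSup (g_bddAbove S N) M

lemma uBD_nonneg (S : Set ℤ) : 0 ≤ upperBanachDensity S := by
  rw [uBD_eq]
  have h1 : (0:ℝ) ≤ limsup (g S) atTop := by
    apply le_limsup_of_frequently_le
    · exact Eventually.frequently (Eventually.of_forall (g_nonneg S))
    · exact isBoundedUnder_of ⟨1, g_le_one S⟩
  exact h1

lemma uBD_le_one (S : Set ℤ) : upperBanachDensity S ≤ 1 := by
  rw [uBD_eq]
  apply limsup_le_of_le
  · exact (isBoundedUnder_of ⟨0, g_nonneg S⟩ : IsBoundedUnder (· ≥ ·) atTop (g S)).isCoboundedUnder_le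
  · exact Eventually.of_forall (g_le_one S)

/-- choice of good base points -/
lemma exists_M (E : Set ℤ) (N : ℕ) (hN : 1 ≤ N) :
    ∃ M : ℤ, g E N - 1/N < (cnt E M N : ℝ) / N := by
  have h : g E N - 1/N < g E N := by
    have : (0:ℝ) < 1/N := by positivity
    linarith
  obtain ⟨M, hM⟩ := exists_lt_of_lt_ciSup h
  exact ⟨M, by rwa [← ncard_eq_cnt]⟩

def Mof (E : Set ℤ) (N : ℕ) : ℤ :=
  if h : 1 ≤ N then Classical.choose (exists_M E N h) else 0

lemma Mof_spec (E : Set ℤ) (N : ℕ) (hN : 1 ≤ N) :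
    g E N - 1/N < (cnt E (Mof E N) N : ℝ) / N := by
  rw [Mof, dif_pos hN]
  exact Classical.choose_spec (exists_M E N hN)

lemma ncard_div_le_g (S : Set ℤ) (M : ℤ) (N : ℕ) :
    ((S ∩ Set.Ico M (M + (N : ℤ))).ncard : ℝ) / N ≤ g S N :=
  le_ciSup (g_bddAbove S N) M

lemma Mof_spec' (E : Set ℤ) (N : ℕ) (hN : 1 ≤ N) :
    g E N - 1/N < ((E ∩ Set.Ico (Mof E N) (Mof E N + (N : ℤ))).ncard : ℝ) / N := by
  rw [ncard_eq_cnt]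
  exact Mof_spec E N hN

lemma inter_Ico_finite (S : Set ℤ) (a b : ℤ) : (S ∩ Set.Ico a b).Finite :=
  (Set.finite_Ico a b).subset Set.inter_subset_right

lemma ncard_Ico_int (a b : ℤ) : (Set.Ico a b).ncard = (b - a).toNat := by
  rw [← Finset.coe_Ico, Set.ncard_coe_finset, Int.card_Ico]

lemma ncard_inter_Ico_le (S : Set ℤ) (M : ℤ) (N : ℕ) :
    (S ∩ Set.Ico M (M + (N : ℤ))).ncard ≤ N := by
  calc (S ∩ Set.Ico M (M + (N : ℤ))).ncard
      ≤ (Set.Ico M (M + (N : ℤ))).ncard :=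
        Set.ncard_le_ncard Set.inter_subset_right (Set.finite_Ico _ _)
  _ = N := by rw [ncard_Ico_int]; simp

variable (E : Set ℤ)

/-- the orbit point -/
def omega (m : ℤ) : X := fun i => decide ((m + i) ∈ E)

lemma omega_mem (m i : ℤ) : omega E m i = true ↔ m + i ∈ E := by
  simp [omega]

/-- shift map -/
def sigma : X → X := fun x i => x (i + 1)

lemma sigma_omega (m : ℤ) : sigma (omega E m) = omega E (m + 1) := by
  funext i
  simp only [sigma, omega]
  have : m + (i + 1) = m + 1 + i := by ring
  rw [this]

/-- empirical average -/
def f (N : ℕ) (S : Set X) : ℝ :=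
  (((omega E ⁻¹' S) ∩ Set.Ico (Mof E N) (Mof E N + (N : ℤ))).ncard : ℝ) / N

lemma f_nonneg (N : ℕ) (S : Set X) : 0 ≤ f E N S := by
  rw [f]; positivity

lemma f_le_one (N : ℕ) (S : Set X) : f E N S ≤ 1 := by
  rcases Nat.eq_zero_or_pos N with h | h
  · simp [f, h]
  · rw [f, div_le_one (by exact_mod_cast h)]
    exact_mod_cast ncard_inter_Ico_le _ _ _

lemma f_mono (N : ℕ) {S S' : Set X} (h : S ⊆ S') : f E N S ≤ f E N S' := by
  rcases Nat.eq_zero_or_pos N with h0 | h0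
  · simp [f, h0]
  · rw [f, f, div_le_div_iff_of_pos_right (by exact_mod_cast h0 : (0:ℝ) < N)]
    exact_mod_cast Set.ncard_le_ncard
      (Set.inter_subset_inter_left _ (Set.preimage_mono h)) (inter_Ico_finite _ _ _)

lemma f_union (N : ℕ) {S S' : Set X} (h : Disjoint S S') :
    f E N (S ∪ S') = f E N S + f E N S' := by
  rw [f, f, f, ← add_div]
  congr 1
  rw [← Nat.cast_add]
  congr 1
  have h1 : (omega E ⁻¹' (S ∪ S')) ∩ Set.Ico (Mof E N) (Mof E N + (N : ℤ))
      = ((omega E ⁻¹' S) ∩ Set.Ico (Mof E N) (Mof E N + (N : ℤ)))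
        ∪ ((omega E ⁻¹' S') ∩ Set.Ico (Mof E N) (Mof E N + (N : ℤ))) := by
    rw [Set.preimage_union, Set.union_inter_distrib_right]
  have disj : Disjoint ((omega E ⁻¹' S) ∩ Set.Ico (Mof E N) (Mof E N + (N : ℤ)))
      ((omega E ⁻¹' S') ∩ Set.Ico (Mof E N) (Mof E N + (N : ℤ))) :=
    Set.disjoint_of_subset Set.inter_subset_left Set.inter_subset_left (h.preimage (omega E))
  rw [h1, Set.ncard_union_eq disj (inter_Ico_finite _ _ _) (inter_Ico_finite _ _ _)]

lemma f_univ (N : ℕ) (hN : 1 ≤ N) : f E N Set.univ = 1 := by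
  rw [f, Set.preimage_univ, Set.univ_inter, ncard_Ico_int]
  have h2 : (Mof E N + (N:ℤ) - Mof E N).toNat = N := by simp
  rw [h2, div_self]
  have : (0:ℝ) < N := by exact_mod_cast hN
  positivity

lemma f_inter (N : ℕ) (α : Finset ℤ) :
    f E N {x : X | ∀ n ∈ α, x n = true}
      = (((⋂ n ∈ α, { m : ℤ | m + n ∈ E }) ∩
          Set.Ico (Mof E N) (Mof E N + (N : ℤ))).ncard : ℝ) / N := by
  rw [f]
  have h1 : omega E ⁻¹' {x : X | ∀ n ∈ α, x n = true} = ⋂ n ∈ α, { m : ℤ | m + n ∈ E } := by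
    ext m
    simp only [Set.mem_preimage, Set.mem_setOf_eq, Set.mem_iInter, omega_mem]
  rw [h1]

lemma f_A (N : ℕ) :
    f E N {x : X | x 0 = true}
      = ((E ∩ Set.Ico (Mof E N) (Mof E N + (N : ℤ))).ncard : ℝ) / N := by
  rw [f]
  have h1 : omega E ⁻¹' {x : X | x 0 = true} = E := by
    ext m
    simp only [Set.mem_preimage, Set.mem_setOf_eq, omega_mem, add_zero]
  rw [h1]

lemma f_shift (N : ℕ) (hN : 1 ≤ N) (S : Set X) :
    |f E N (sigma ⁻¹' S) - f E N S| ≤ 1/N := by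
  set M := Mof E N with hM
  set G := omega E ⁻¹' S with hG
  have hpre : omega E ⁻¹' (sigma ⁻¹' S) = (fun m => m + 1) ⁻¹' G := by
    ext m
    simp only [Set.mem_preimage, hG, sigma_omega]
  have himg : ((fun m : ℤ => m + 1) ⁻¹' G ∩ Set.Ico M (M + (N:ℤ))).ncard
      = (G ∩ Set.Ico (M+1) (M + (N:ℤ) + 1)).ncard := by
    rw [← Set.ncard_image_of_injective _ (add_left_injective (1:ℤ))]
    congr 1
    ext m
    simp only [Set.mem_image, Set.mem_inter_iff, Set.mem_preimage, Set.mem_Ico]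
    constructor
    · rintro ⟨k, ⟨hk1, hk2, hk3⟩, rfl⟩
      exact ⟨hk1, by omega, by omega⟩
    · rintro ⟨h1, h2, h3⟩
      exact ⟨m - 1, ⟨by simpa using h1, by omega, by omega⟩, by ring⟩
  -- set up the three counts
  set c0 := (G ∩ Set.Ico (M+1) (M + (N:ℤ))).ncard with hc0
  set c1 := (G ∩ Set.Ico M (M + (N:ℤ))).ncard with hc1
  set c2 := (G ∩ Set.Ico (M+1) (M + (N:ℤ) + 1)).ncard with hc2
  have h01 : c0 ≤ c1 := Set.ncard_le_ncard
    (Set.inter_subset_inter_right _ (Set.Ico_subset_Ico (by omega) le_rfl))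
    (inter_Ico_finite _ _ _)
  have h02 : c0 ≤ c2 := Set.ncard_le_ncard
    (Set.inter_subset_inter_right _ (Set.Ico_subset_Ico le_rfl (by omega)))
    (inter_Ico_finite _ _ _)
  have h10 : c1 ≤ c0 + 1 := by
    have hsub : G ∩ Set.Ico M (M + (N:ℤ)) ⊆ insert M (G ∩ Set.Ico (M+1) (M + (N:ℤ))) := by
      rintro m ⟨hm, h1, h2⟩
      rcases eq_or_lt_of_le h1 with rfl | h1'
      · exact Set.mem_insert _ _
      · exact Set.mem_insert_of_mem _ ⟨hm, by omega, h2⟩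
    calc c1 ≤ (insert M (G ∩ Set.Ico (M+1) (M + (N:ℤ)))).ncard :=
          Set.ncard_le_ncard hsub ((inter_Ico_finite _ _ _).insert M)
    _ ≤ c0 + 1 := Set.ncard_insert_le _ _
  have h20 : c2 ≤ c0 + 1 := by
    have hsub : G ∩ Set.Ico (M+1) (M + (N:ℤ) + 1)
        ⊆ insert (M + (N:ℤ)) (G ∩ Set.Ico (M+1) (M + (N:ℤ))) := by
      rintro m ⟨hm, h1, h2⟩
      rcases eq_or_lt_of_le (by omega : m ≤ M + (N:ℤ)) with rfl | h2'
      · exact Set.mem_insert _ _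
      · exact Set.mem_insert_of_mem _ ⟨hm, h1, by omega⟩
    calc c2 ≤ (insert (M + (N:ℤ)) (G ∩ Set.Ico (M+1) (M + (N:ℤ)))).ncard :=
          Set.ncard_le_ncard hsub ((inter_Ico_finite _ _ _).insert _)
    _ ≤ c0 + 1 := Set.ncard_insert_le _ _
  have hNpos : (0:ℝ) < N := by exact_mod_cast hN
  rw [f, f, hpre, himg, abs_sub_le_iff]
  have hb1 : (c2:ℝ) ≤ (c1:ℝ) + 1 := by exact_mod_cast le_trans h20 (by omega)
  have hb2 : (c1:ℝ) ≤ (c2:ℝ) + 1 := by exact_mod_cast le_trans h10 (by omega)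
  constructor
  · rw [div_sub_div_same, div_le_div_iff_of_pos_right hNpos]
    linarith
  · rw [div_sub_div_same, div_le_div_iff_of_pos_right hNpos]
    linarith
/-- good levels -/
def Sj (j : ℕ) : Set ℕ := {N | j ≤ N ∧ upperBanachDensity E - 1/(j+1) < g E N}

lemma Sj_nonempty (j : ℕ) : (Sj E j).Nonempty := by
  have hcb : IsCoboundedUnder (· ≤ ·) atTop (g E) :=
    (isBoundedUnder_of ⟨0, g_nonneg E⟩ : IsBoundedUnder (· ≥ ·) atTop (g E)).isCoboundedUnder_le
  have hlt : upperBanachDensity E - 1/(j+1) < limsup (g E) atTop := by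
    rw [← uBD_eq]
    have : (0:ℝ) < 1/(j+1) := by positivity
    linarith
  have hfreq := frequently_lt_of_lt_limsup hcb hlt
  obtain ⟨N, hN1, hN2⟩ := ((eventually_ge_atTop j).and_frequently hfreq).exists
  exact ⟨N, hN1, hN2⟩

lemma Sj_antitone : Antitone (Sj E) := by
  intro j j' hjj' N hN
  refine ⟨le_trans hjj' hN.1, lt_of_le_of_lt ?_ hN.2⟩
  have h1 : (1:ℝ)/(j'+1) ≤ 1/(j+1) := by
    apply one_div_le_one_div_of_le (by positivity)
    exact_mod_cast add_le_add_left (Nat.cast_le.mpr hjj') 1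
  linarith

/-- base filter -/
def Fbase : Filter ℕ := ⨅ j : ℕ, Filter.principal (Sj E j)

lemma Fbase_neBot : (Fbase E).NeBot := by
  apply Filter.iInf_neBot_of_directed
  · intro i j
    exact ⟨max i j, Filter.principal_mono.mpr (Sj_antitone E (le_max_left i j)),
      Filter.principal_mono.mpr (Sj_antitone E (le_max_right i j))⟩
  · intro j
    rw [Filter.principal_neBot_iff]
    exact Sj_nonempty E j

/-- the ultrafilter -/
def U : Ultrafilter ℕ := @Ultrafilter.of _ (Fbase E) (Fbase_neBot E)

lemma Sj_mem_U (j : ℕ) : Sj E j ∈ U E := by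
  have h1 : (U E : Filter ℕ) ≤ Fbase E := by
    haveI := Fbase_neBot E
    exact Ultrafilter.of_le _
  exact h1 (Filter.mem_iInf_of_mem j (Filter.mem_principal_self _))

lemma U_le_atTop : (U E : Filter ℕ) ≤ atTop := by
  rw [← Filter.map_id (f := (U E : Filter ℕ))]
  apply Filter.tendsto_atTop.mpr
  intro j
  filter_upwards [Sj_mem_U E j] with N hN using hN.1

lemma eventually_ge_U (j : ℕ) : ∀ᶠ N in (U E : Filter ℕ), j ≤ N :=
  (U_le_atTop E) (eventually_ge_atTop j)

/-- the limit functional -/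
def ell (S : Set X) : ℝ := limsup (fun N => f E N S) (U E)

lemma tendsto_U_limsup (h : ℕ → ℝ) (h0 : ∀ N, h N ∈ Set.Icc (0:ℝ) 1) :
    Tendsto h (U E : Filter ℕ) (nhds (limsup h (U E : Filter ℕ))) := by
  have hle : (Ultrafilter.map h (U E) : Filter ℝ) ≤ Filter.principal (Set.Icc (0:ℝ) 1) := by
    rw [Filter.le_principal_iff]
    exact Filter.mem_map.mpr (Filter.Eventually.of_forall h0)
  obtain ⟨a, -, ha⟩ := (isCompact_Icc (a := (0:ℝ)) (b := 1)).ultrafilter_le_nhds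
    (Ultrafilter.map h (U E)) hle
  have hT : Tendsto h (U E : Filter ℕ) (nhds a) := ha
  rw [hT.limsup_eq]
  exact hT

lemma tendsto_ell (S : Set X) :
    Tendsto (fun N => f E N S) (U E : Filter ℕ) (nhds (ell E S)) :=
  tendsto_U_limsup E _ (fun N => ⟨f_nonneg E N S, f_le_one E N S⟩)

lemma ell_nonneg (S : Set X) : 0 ≤ ell E S :=
  ge_of_tendsto (tendsto_ell E S) (Filter.Eventually.of_forall (fun N => f_nonneg E N S))

lemma ell_le_one (S : Set X) : ell E S ≤ 1 :=
  le_of_tendsto (tendsto_ell E S) (Filter.Eventually.of_forall (fun N => f_le_one E N S))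

lemma ell_mono {S S' : Set X} (h : S ⊆ S') : ell E S ≤ ell E S' :=
  le_of_tendsto_of_tendsto' (tendsto_ell E S) (tendsto_ell E S')
    (fun N => f_mono E N h)

lemma ell_union {S S' : Set X} (h : Disjoint S S') :
    ell E (S ∪ S') = ell E S + ell E S' := by
  have h1 : Tendsto (fun N => f E N (S ∪ S')) (U E : Filter ℕ)
      (nhds (ell E S + ell E S')) := by
    have := (tendsto_ell E S).add (tendsto_ell E S')
    apply this.congr
    intro N
    exact (f_union E N h).symm
  exact tendsto_nhds_unique (tendsto_ell E (S ∪ S')) h1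

lemma ell_univ : ell E Set.univ = 1 := by
  have h1 : Tendsto (fun N => f E N Set.univ) (U E : Filter ℕ) (nhds 1) := by
    apply Tendsto.congr' ?_ tendsto_const_nhds
    filter_upwards [eventually_ge_U E 1] with N hN using (f_univ E N hN).symm
  exact tendsto_nhds_unique (tendsto_ell E Set.univ) h1

lemma ell_shift (S : Set X) : ell E (sigma ⁻¹' S) = ell E S := by
  have hz : Tendsto (fun N => f E N (sigma ⁻¹' S) - f E N S) (U E : Filter ℕ) (nhds 0) := by
    apply squeeze_zero_norm' (a := fun N : ℕ => 1/(N:ℝ))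
    · filter_upwards [eventually_ge_U E 1] with N hN using f_shift E N hN S
    · exact tendsto_one_div_atTop_nhds_zero_nat.mono_left (U_le_atTop E)
  have h1 := (tendsto_ell E S).add hz
  rw [add_zero] at h1
  have h2 : Tendsto (fun N => f E N (sigma ⁻¹' S)) (U E : Filter ℕ)
      (nhds (ell E S)) := by
    apply h1.congr
    intro N
    ring
  exact tendsto_nhds_unique (tendsto_ell E (sigma ⁻¹' S)) h2

/-- upper bound against Banach density -/
lemma ell_le_uBD_of_cnt (S : Set X) (F : Set ℤ)
    (hf : ∀ N : ℕ, f E N S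
      = ((F ∩ Set.Ico (Mof E N) (Mof E N + (N : ℤ))).ncard : ℝ) / N) :
    ell E S ≤ upperBanachDensity F := by
  have h1 : ell E S ≤ limsup (g F) (U E : Filter ℕ) := by
    rw [ell]
    refine limsup_le_limsup ?_ ?_ ?_
    · apply Filter.Eventually.of_forall
      intro N
      exact le_of_eq_of_le (hf N) (ncard_div_le_g F _ N)
    · exact (isBoundedUnder_of ⟨0, fun N => f_nonneg E N S⟩ :
        IsBoundedUnder (· ≥ ·) (U E : Filter ℕ) _).isCoboundedUnder_le
    · exact isBoundedUnder_of ⟨1, g_le_one F⟩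
  have h2 : limsup (g F) (U E : Filter ℕ) ≤ limsup (g F) atTop := by
    refine limsup_le_limsup_of_le (U_le_atTop E) ?_ ?_
    · exact (isBoundedUnder_of ⟨0, g_nonneg F⟩ :
        IsBoundedUnder (· ≥ ·) (U E : Filter ℕ) _).isCoboundedUnder_le
    · exact isBoundedUnder_of ⟨1, g_le_one F⟩
  rw [uBD_eq]
  exact le_trans h1 h2

lemma ell_A_eq : ell E {x : X | x 0 = true} = upperBanachDensity E := by
  apply le_antisymm
  · exact ell_le_uBD_of_cnt E _ E (f_A E)
  · -- lower bound
    have key : ∀ j : ℕ, upperBanachDensity E - 2/(j+1) ≤ ell E {x : X | x 0 = true} := by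
      intro j
      apply ge_of_tendsto (tendsto_ell E _)
      filter_upwards [Sj_mem_U E (j+1)] with N hN
      obtain ⟨hN1, hN2⟩ := hN
      have hN1' : 1 ≤ N := le_trans (Nat.le_add_left 1 j) hN1
      have h3 := Mof_spec' E N hN1'
      rw [f_A E N]
      have h4 : (1:ℝ)/N ≤ 1/(j+1) := by
        apply one_div_le_one_div_of_le (by positivity)
        exact_mod_cast hN1
      have h5 : (1:ℝ)/(j+1+1) ≤ 1/(j+1) := by
        apply one_div_le_one_div_of_le (by positivity)
        linarith
      have h6 : upperBanachDensity E - 1/(j+1+1) < g E N := by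
        convert hN2 using 3
        push_cast
        ring
      have h2j : (2:ℝ)/(j+1) = 1/(j+1) + 1/(j+1) := by ring
      linarith
    have hlim : Tendsto (fun j : ℕ => upperBanachDensity E - 2/(j+1)) atTop
        (nhds (upperBanachDensity E)) := by
      have h0 : Tendsto (fun j : ℕ => 2/((j:ℝ)+1)) atTop (nhds 0) := by
        have := tendsto_one_div_add_atTop_nhds_zero_nat (𝕜 := ℝ)
        have h2 := this.const_mul (2:ℝ)
        simpa [one_div, div_eq_mul_inv] using h2
      have := tendsto_const_nhds (x := upperBanachDensity E) (f := atTop (α := ℕ)) |>.sub h0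
      simpa using this
    exact le_of_tendsto hlim (Filter.Eventually.of_forall key)
/-! ### The shift as a permutation and homeomorphism -/

def Tperm : Equiv.Perm X where
  toFun := sigma
  invFun := fun x i => x (i - 1)
  left_inv := by
    intro x; funext i; simp [sigma]
  right_inv := by
    intro x; funext i; simp [sigma]

lemma Tperm_continuous : Continuous (Tperm : X → X) :=
  continuous_pi fun i => continuous_apply (i + 1)

lemma Tperm_symm_continuous : Continuous (Tperm.symm : X → X) :=
  continuous_pi fun i => continuous_apply (i - 1)

def Thomeo : X ≃ₜ X where
  toEquiv := Tperm
  continuous_toFun := Tperm_continuous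
  continuous_invFun := Tperm_symm_continuous

lemma Thomeo_coe : (Thomeo : X → X) = sigma := rfl

lemma Tperm_zpow_apply : ∀ (n : ℤ) (x : X) (i : ℤ), ((Tperm ^ n) x) i = x (i + n) := by
  intro n
  induction n using Int.induction_on with
  | zero => intro x i; simp
  | succ k ih =>
    intro x i
    rw [zpow_add_one, Equiv.Perm.mul_apply, ih (Tperm x) i]
    show x (i + k + 1) = x (i + (k + 1))
    ring_nf
  | pred k ih =>
    intro x i
    rw [zpow_sub_one, Equiv.Perm.mul_apply, ih (Tperm⁻¹ x) i]
    show x (i + -(k:ℤ) - 1) = x (i + (-(k:ℤ) - 1))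
    ring_nf

/-! ### Clopen separation -/

lemma exists_clopen_between {K U : Set X} (hK : IsCompact K) (hU : IsOpen U) (hKU : K ⊆ U) :
    ∃ C : Set X, IsClopen C ∧ K ⊆ C ∧ C ⊆ U := by
  have hx : ∀ x ∈ K, ∃ V : Set X, IsClopen V ∧ x ∈ V ∧ V ⊆ U := fun x hx =>
    compact_exists_isClopen_in_isOpen hU (hKU hx)
  choose! V hV1 hV2 hV3 using hx
  have hcover : K ⊆ ⋃ x ∈ K, V x := fun x hx => Set.mem_biUnion hx (hV2 x hx)
  obtain ⟨t, htK, htfin, htcover⟩ := hK.elim_finite_subcover_image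
    (fun x hx => (hV1 x hx).2) hcover
  refine ⟨⋃ x ∈ t, V x, ?_, htcover, ?_⟩
  · exact htfin.isClopen_biUnion (fun x hx => hV1 x (htK hx))
  · exact Set.iUnion₂_subset fun x hx => hV3 x (htK hx)

/-! ### The content -/

def lam (K : Set X) : ℝ := sInf (ell E '' {C : Set X | IsClopen C ∧ K ⊆ C})

lemma lam_set_nonempty (K : Set X) : (ell E '' {C : Set X | IsClopen C ∧ K ⊆ C}).Nonempty :=
  ⟨ell E Set.univ, ⟨Set.univ, ⟨isClopen_univ, Set.subset_univ _⟩, rfl⟩⟩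

lemma lam_bddBelow (K : Set X) : BddBelow (ell E '' {C : Set X | IsClopen C ∧ K ⊆ C}) := by
  refine ⟨0, ?_⟩
  rintro r ⟨C, -, rfl⟩
  exact ell_nonneg E C

lemma lam_nonneg (K : Set X) : 0 ≤ lam E K := by
  apply le_csInf (lam_set_nonempty E K)
  rintro r ⟨C, -, rfl⟩
  exact ell_nonneg E C

lemma lam_le {K C : Set X} (hC : IsClopen C) (hKC : K ⊆ C) : lam E K ≤ ell E C :=
  csInf_le (lam_bddBelow E K) ⟨C, ⟨hC, hKC⟩, rfl⟩

lemma le_lam {K : Set X} {r : ℝ} (h : ∀ C : Set X, IsClopen C → K ⊆ C → r ≤ ell E C) :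
    r ≤ lam E K := by
  apply le_csInf (lam_set_nonempty E K)
  rintro s ⟨C, ⟨hC, hKC⟩, rfl⟩
  exact h C hC hKC

lemma lam_clopen {K : Set X} (hK : IsClopen K) : lam E K = ell E K :=
  le_antisymm (lam_le E hK subset_rfl) (le_lam E fun _ _ hKC => ell_mono E hKC)

lemma lam_mono {K K' : Set X} (h : K ⊆ K') : lam E K ≤ lam E K' := by
  apply le_csInf (lam_set_nonempty E K')
  rintro r ⟨C, ⟨hC, hKC⟩, rfl⟩
  exact lam_le E hC (h.trans hKC)

lemma ell_union_le (S S' : Set X) : ell E (S ∪ S') ≤ ell E S + ell E S' := by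
  have h1 : S ∪ S' = S ∪ (S' \ S) := by simp [Set.union_diff_self]
  rw [h1, ell_union E disjoint_sdiff_self_right]
  have := ell_mono E (Set.diff_subset : S' \ S ⊆ S')
  linarith

lemma lam_union_le (K K' : Set X) : lam E (K ∪ K') ≤ lam E K + lam E K' := by
  have h1 : ∀ r ∈ ell E '' {C : Set X | IsClopen C ∧ K ⊆ C},
      ∀ r' ∈ ell E '' {C : Set X | IsClopen C ∧ K' ⊆ C}, lam E (K ∪ K') ≤ r + r' := by
    rintro r ⟨C, ⟨hC, hKC⟩, rfl⟩ r' ⟨C', ⟨hC', hKC'⟩, rfl⟩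
    calc lam E (K ∪ K') ≤ ell E (C ∪ C') :=
          lam_le E (hC.union hC') (Set.union_subset_union hKC hKC')
    _ ≤ ell E C + ell E C' := ell_union_le E C C'
  have h2 : ∀ r ∈ ell E '' {C : Set X | IsClopen C ∧ K ⊆ C},
      lam E (K ∪ K') - r ≤ lam E K' := by
    intro r hr
    apply le_csInf (lam_set_nonempty E K')
    intro r' hr'
    linarith [h1 r hr r' hr']
  have h3 : lam E (K ∪ K') - lam E K' ≤ lam E K := by
    apply le_csInf (lam_set_nonempty E K)
    intro r hr
    linarith [h2 r hr]
  linarith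

lemma lam_union_eq {K K' : Set X} (hK : IsCompact K) (hK' : IsCompact K')
    (hd : Disjoint K K') : lam E (K ∪ K') = lam E K + lam E K' := by
  refine le_antisymm (lam_union_le E K K') ?_
  obtain ⟨D, hD, hKD, hDK'⟩ := exists_clopen_between hK hK'.isClosed.isOpen_compl
    (Set.subset_compl_iff_disjoint_right.mpr hd)
  apply le_lam
  intro C hC hKC
  have hCD : IsClopen (C ∩ D) := hC.inter hD
  have hCDc : IsClopen (C ∩ Dᶜ) := hC.inter hD.compl
  have hsplit : C = (C ∩ D) ∪ (C ∩ Dᶜ) := by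
    rw [← Set.inter_union_distrib_left, Set.union_compl_self, Set.inter_univ]
  have hdisj : Disjoint (C ∩ D) (C ∩ Dᶜ) :=
    Set.disjoint_of_subset Set.inter_subset_right Set.inter_subset_right
      (disjoint_compl_right)
  have h1 : lam E K ≤ ell E (C ∩ D) :=
    lam_le E hCD (Set.subset_inter ((Set.subset_union_left).trans hKC) hKD)
  have h2 : lam E K' ≤ ell E (C ∩ Dᶜ) := by
    apply lam_le E hCDc
    exact Set.subset_inter ((Set.subset_union_right).trans hKC)
      (Set.subset_compl_comm.mp hDK')
  have h3 : ell E C = ell E (C ∩ D) + ell E (C ∩ Dᶜ) := by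
    conv_lhs => rw [hsplit]
    exact ell_union E hdisj
  linarith

def con : Content X where
  toFun K := Real.toNNReal (lam E K)
  mono' K K' h := Real.toNNReal_mono (lam_mono E h)
  sup_disjoint' K K' hd _ _ := by
    simp only [TopologicalSpace.Compacts.coe_sup]
    rw [lam_union_eq E K.isCompact K'.isCompact hd,
      Real.toNNReal_add (lam_nonneg E K) (lam_nonneg E K')]
  sup_le' K K' := by
    simp only [TopologicalSpace.Compacts.coe_sup]
    rw [← Real.toNNReal_add (lam_nonneg E K) (lam_nonneg E K')]
    exact Real.toNNReal_mono (lam_union_le E K K')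

def mu : Measure X := (con E).measure

lemma mu_clopen {C : Set X} (hC : IsClopen C) : mu E C = ENNReal.ofReal (ell E C) := by
  have hCc : IsCompact C := hC.isClosed.isCompact
  rw [mu, Content.measure_apply _ hC.isOpen.measurableSet,
    (con E).outerMeasure_of_isOpen C hC.isOpen,
    (con E).innerContent_of_isCompact hCc hC.isOpen]
  show ((Real.toNNReal (lam E C)) : ℝ≥0∞) = _
  rw [lam_clopen E hC]
  rfl

/-! ### invariance -/

lemma lam_image (K : Set X) : lam E (sigma '' K) = lam E K := by
  rw [lam, lam]
  congr 1
  ext r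
  constructor
  · rintro ⟨C, ⟨hC, hKC⟩, rfl⟩
    refine ⟨sigma ⁻¹' C, ⟨hC.preimage Tperm_continuous, ?_⟩, ell_shift E C⟩
    exact (Set.image_subset_iff).mp hKC
  · rintro ⟨D, ⟨hD, hKD⟩, rfl⟩
    refine ⟨(Tperm.symm : X → X) ⁻¹' D, ⟨hD.preimage Tperm_symm_continuous, ?_⟩, ?_⟩
    · rw [Set.image_subset_iff, Set.preimage_preimage]
      have : ∀ x : X, Tperm.symm (sigma x) = x := fun x => Tperm.left_inv x
      simpa [this] using hKD
    · have h1 : sigma ⁻¹' ((Tperm.symm : X → X) ⁻¹' D) = D := by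
        rw [Set.preimage_preimage]
        have : ∀ x : X, Tperm.symm (sigma x) = x := fun x => Tperm.left_inv x
        simp [this]
      rw [← ell_shift E ((Tperm.symm : X → X) ⁻¹' D), h1]

lemma mu_preimage {s : Set X} (hs : MeasurableSet s) :
    mu E ((Tperm : X → X) ⁻¹' s) = mu E s := by
  have hinv : ∀ ⦃K : TopologicalSpace.Compacts X⦄,
      (con E) (K.map Thomeo Thomeo.continuous) = (con E) K := by
    intro K
    show ((Real.toNNReal (lam E _)) : ℝ≥0∞) = ((Real.toNNReal (lam E _)) : ℝ≥0∞)
    rw [TopologicalSpace.Compacts.coe_map]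
    rw [show (Thomeo : X → X) '' K = sigma '' K from rfl, lam_image E K]
  have h1 := (con E).outerMeasure_preimage Thomeo hinv s
  have hms : MeasurableSet ((Tperm : X → X) ⁻¹' s) :=
    hs.preimage Tperm_continuous.measurable
  rw [mu, Content.measure_apply _ hms, Content.measure_apply _ hs]
  exact h1

lemma mu_preimage_symm {s : Set X} (hs : MeasurableSet s) :
    mu E ((Tperm.symm : X → X) ⁻¹' s) = mu E s := by
  have hms : MeasurableSet ((Tperm.symm : X → X) ⁻¹' s) :=
    hs.preimage Tperm_symm_continuous.measurable
  have h1 := mu_preimage E hms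
  have h2 : (Tperm : X → X) ⁻¹' ((Tperm.symm : X → X) ⁻¹' s) = s := by
    rw [Set.preimage_preimage]
    have : ∀ x : X, Tperm.symm (Tperm x) = x := fun x => Tperm.left_inv x
    simp [this]
  rw [h2] at h1
  exact h1.symm
lemma coord_clopen (n : ℤ) : IsClopen {x : X | x n = true} := by
  have h1 : IsClopen ({true} : Set Bool) := isClopen_discrete {true}
  have h2 := h1.preimage (continuous_apply (A := fun _ : ℤ => Bool) n)
  convert h2 using 1
  rfl

end
end FC

theorem stmt_18 (E : Set ℤ) (hE : 0 < upperBanachDensity E) :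
    ∃ (X : Type) (_ : MeasurableSpace X) (μ : Measure X)
      (_ : IsProbabilityMeasure μ) (T : Equiv.Perm X),
      Measurable (⇑T) ∧ Measurable (⇑T.symm) ∧
      MeasurePreserving (⇑T) μ μ ∧ MeasurePreserving (⇑T.symm) μ μ ∧
      ∃ A : Set X, MeasurableSet A ∧ μ A = ENNReal.ofReal (upperBanachDensity E) ∧
        ∀ α : Finset ℤ, α.Nonempty →
          (μ (⋂ n ∈ α, (⇑(T ^ n))⁻¹' A)).toReal ≤
            upperBanachDensity (⋂ n ∈ α, { m : ℤ | m + n ∈ E }) := by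
  have hA : IsClopen {x : FC.X | x 0 = true} := FC.coord_clopen 0
  refine ⟨FC.X, inferInstance, FC.mu E, ?_, FC.Tperm,
    FC.Tperm_continuous.measurable, FC.Tperm_symm_continuous.measurable, ?_, ?_,
    {x : FC.X | x 0 = true}, hA.isOpen.measurableSet, ?_, ?_⟩
  · constructor
    rw [FC.mu_clopen E isClopen_univ, FC.ell_univ E, ENNReal.ofReal_one]
  · exact ⟨FC.Tperm_continuous.measurable, Measure.ext fun s hs => by
      rw [Measure.map_apply FC.Tperm_continuous.measurable hs, FC.mu_preimage E hs]⟩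
  · exact ⟨FC.Tperm_symm_continuous.measurable, Measure.ext fun s hs => by
      rw [Measure.map_apply FC.Tperm_symm_continuous.measurable hs,
        FC.mu_preimage_symm E hs]⟩
  · rw [FC.mu_clopen E hA, FC.ell_A_eq E]
  · intro α hα
    have hCset : (⋂ n ∈ α, (⇑(FC.Tperm ^ n))⁻¹' {x : FC.X | x 0 = true})
        = {x : FC.X | ∀ n ∈ α, x n = true} := by
      ext x
      simp only [Set.mem_iInter, Set.mem_preimage, Set.mem_setOf_eq,
        FC.Tperm_zpow_apply, zero_add]
    have hclopen : IsClopen {x : FC.X | ∀ n ∈ α, x n = true} := by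
      rw [show {x : FC.X | ∀ n ∈ α, x n = true}
          = ⋂ n ∈ (α : Set ℤ), {x : FC.X | x n = true} from by ext x; simp]
      exact (α.finite_toSet).isClopen_biInter (fun n _ => FC.coord_clopen n)
    rw [hCset, FC.mu_clopen E hclopen, ENNReal.toReal_ofReal (FC.ell_nonneg E _)]
    exact FC.ell_le_uBD_of_cnt E _ _ (fun N => FC.f_inter E N α)
end

section
/- Let d ≥ 1 and let S ⊆ ℤ be a set of d-recurrence. Then S is a set of d-topological recurrence; that is, for every nonempty compact metric space X, every homeomorphism T : X → X such that every orbit {Tⁿx : n ∈ ℤ} is dense in X, and every nonempty open set U ⊆ X, there exists n ∈ S such that U ∩ T^{−n}U ∩ T^{−2n}U ∩ ⋯ ∩ T^{−dn}U ≠ ∅. -/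
open MeasureTheory

/-- `S ⊆ ℤ` is a set of `d`-recurrence: for every invertible measure-preserving
transformation `T` of a probability space and every measurable `A` with `μ A > 0`,
there is `n ∈ S` with `μ(A ∩ T^{−n}A ∩ ⋯ ∩ T^{−dn}A) > 0`. -/
def IsSetOfDRecurrence (d : ℕ) (S : Set ℤ) : Prop :=
  ∀ (X : Type) [MeasurableSpace X] (μ : Measure X) [IsProbabilityMeasure μ]
    (T : Equiv.Perm X), Measurable (⇑T) → Measurable (⇑T.symm) →
    MeasurePreserving (⇑T) μ μ → MeasurePreserving (⇑T.symm) μ μ →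
    ∀ A : Set X, MeasurableSet A → 0 < μ A →
      ∃ n ∈ S, 0 < μ (⋂ i ∈ Finset.range (d + 1), (⇑(T ^ ((i : ℤ) * n)))⁻¹' A)

open BoundedContinuousFunction NNReal ENNReal Filter Set TopologicalSpace

noncomputable section KB

/-- A fixed ultrafilter on `ℕ` extending `atTop`. -/
def UF : Ultrafilter ℕ := Ultrafilter.of Filter.atTop

lemma UF_le_atTop : (UF : Filter ℕ) ≤ Filter.atTop := Ultrafilter.of_le _

variable {X : Type} [MetricSpace X] [CompactSpace X] [Nonempty X]

/-- Cesàro average of `f` along the orbit of `x₀`. -/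
def avgF (T : Equiv.Perm X) (x₀ : X) (M : ℕ) (f : X →ᵇ ℝ≥0) : ℝ≥0 :=
  ((M : ℝ≥0) + 1)⁻¹ * ∑ k ∈ Finset.range (M + 1), f ((T ^ k) x₀)

lemma avgF_le (T : Equiv.Perm X) (x₀ : X) (M : ℕ) (f : X →ᵇ ℝ≥0) {C : ℝ≥0}
    (hC : ∀ x, f x ≤ C) : avgF T x₀ M f ≤ C := by
  have hsum : ∑ k ∈ Finset.range (M + 1), f ((T ^ k) x₀) ≤ (M + 1) • C := by
    refine le_trans (Finset.sum_le_card_nsmul _ _ C ?_) ?_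
    · intro k _
      exact hC _
    · simp
  calc avgF T x₀ M f ≤ ((M : ℝ≥0) + 1)⁻¹ * ((M + 1) • C) := by
        exact mul_le_mul_right hsum _
    _ = C := by
        rw [nsmul_eq_mul, ← mul_assoc]
        rw [show ((M + 1 : ℕ) : ℝ≥0) = (M : ℝ≥0) + 1 by push_cast; ring]
        rw [inv_mul_cancel₀ (by positivity), one_mul]

lemma exists_lim (T : Equiv.Perm X) (x₀ : X) (f : X →ᵇ ℝ≥0) :
    ∃ a, Filter.Tendsto (fun M => avgF T x₀ M f) (UF : Filter ℕ) (nhds a) := by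
  obtain ⟨z, hz⟩ := f.continuous.exists_forall_ge' (Classical.arbitrary X)
    (by simp [Filter.cocompact_eq_bot])
  set C : ℝ≥0 := f z with hCdef
  have hmem : ∀ M, avgF T x₀ M f ∈ Set.Icc (0 : ℝ≥0) C := fun M =>
    ⟨zero_le, avgF_le T x₀ M f hz⟩
  have hle : (Ultrafilter.map (fun M => avgF T x₀ M f) UF : Filter ℝ≥0)
      ≤ Filter.principal (Set.Icc (0 : ℝ≥0) C) := by
    rw [Ultrafilter.coe_map, Filter.le_principal_iff]
    exact Filter.mem_map.2 (Filter.Eventually.of_forall hmem)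
  obtain ⟨a, -, ha⟩ := (isCompact_Icc (a := (0 : ℝ≥0)) (b := C)).ultrafilter_le_nhds
    (Ultrafilter.map (fun M => avgF T x₀ M f) UF) hle
  exact ⟨a, by rwa [Ultrafilter.coe_map] at ha⟩

/-- Ultrafilter limit of Cesàro averages: an invariant positive functional. -/
def lamF (T : Equiv.Perm X) (x₀ : X) (f : X →ᵇ ℝ≥0) : ℝ≥0 :=
  (exists_lim T x₀ f).choose

lemma lamF_spec (T : Equiv.Perm X) (x₀ : X) (f : X →ᵇ ℝ≥0) :
    Filter.Tendsto (fun M => avgF T x₀ M f) (UF : Filter ℕ) (nhds (lamF T x₀ f)) :=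
  (exists_lim T x₀ f).choose_spec

lemma avgF_add (T : Equiv.Perm X) (x₀ : X) (M : ℕ) (f g : X →ᵇ ℝ≥0) :
    avgF T x₀ M (f + g) = avgF T x₀ M f + avgF T x₀ M g := by
  simp [avgF, Finset.sum_add_distrib, mul_add]

lemma avgF_smul (T : Equiv.Perm X) (x₀ : X) (M : ℕ) (c : ℝ≥0) (f : X →ᵇ ℝ≥0) :
    avgF T x₀ M (c • f) = c * avgF T x₀ M f := by
  simp [avgF, Finset.mul_sum, smul_eq_mul, mul_left_comm]

lemma avgF_one (T : Equiv.Perm X) (x₀ : X) (M : ℕ) :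
    avgF T x₀ M (1 : X →ᵇ ℝ≥0) = 1 := by
  simp only [avgF, BoundedContinuousFunction.coe_one, Pi.one_apply, Finset.sum_const,
    Finset.card_range, nsmul_eq_mul, mul_one]
  rw [show ((M + 1 : ℕ) : ℝ≥0) = (M : ℝ≥0) + 1 by push_cast; ring]
  rw [inv_mul_cancel₀ (by positivity)]

lemma avgF_mono (T : Equiv.Perm X) (x₀ : X) (M : ℕ) {f g : X →ᵇ ℝ≥0}
    (h : ∀ x, f x ≤ g x) : avgF T x₀ M f ≤ avgF T x₀ M g :=
  mul_le_mul_right (Finset.sum_le_sum fun k _ => h _) _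

lemma lamF_eq_of_tendsto (T : Equiv.Perm X) (x₀ : X) {f : X →ᵇ ℝ≥0} {a : ℝ≥0}
    (h : Filter.Tendsto (fun M => avgF T x₀ M f) (UF : Filter ℕ) (nhds a)) :
    lamF T x₀ f = a :=
  tendsto_nhds_unique (lamF_spec T x₀ f) h

lemma lamF_add (T : Equiv.Perm X) (x₀ : X) (f g : X →ᵇ ℝ≥0) :
    lamF T x₀ (f + g) = lamF T x₀ f + lamF T x₀ g := by
  refine lamF_eq_of_tendsto T x₀ ?_
  have := (lamF_spec T x₀ f).add (lamF_spec T x₀ g)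
  simpa [avgF_add] using this

lemma lamF_smul (T : Equiv.Perm X) (x₀ : X) (c : ℝ≥0) (f : X →ᵇ ℝ≥0) :
    lamF T x₀ (c • f) = c * lamF T x₀ f := by
  refine lamF_eq_of_tendsto T x₀ ?_
  have := (lamF_spec T x₀ f).const_mul c
  simpa [avgF_smul] using this

lemma lamF_one (T : Equiv.Perm X) (x₀ : X) : lamF T x₀ (1 : X →ᵇ ℝ≥0) = 1 := by
  refine lamF_eq_of_tendsto T x₀ ?_
  simpa [avgF_one] using (tendsto_const_nhds :
    Filter.Tendsto (fun _ : ℕ => (1 : ℝ≥0)) (UF : Filter ℕ) (nhds 1))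

lemma lamF_mono (T : Equiv.Perm X) (x₀ : X) {f g : X →ᵇ ℝ≥0} (h : ∀ x, f x ≤ g x) :
    lamF T x₀ f ≤ lamF T x₀ g :=
  le_of_tendsto_of_tendsto' (lamF_spec T x₀ f) (lamF_spec T x₀ g)
    (fun M => avgF_mono T x₀ M h)

/-- Composition with `T` as a bounded continuous function. -/
def compT (T : Equiv.Perm X) (hTc : Continuous (⇑T)) (f : X →ᵇ ℝ≥0) : X →ᵇ ℝ≥0 :=
  BoundedContinuousFunction.mkOfCompact ⟨fun x => f (T x), f.continuous.comp hTc⟩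

@[simp] lemma compT_apply (T : Equiv.Perm X) (hTc : Continuous (⇑T)) (f : X →ᵇ ℝ≥0) (x : X) :
    compT T hTc f x = f (T x) := rfl

lemma lamF_comp (T : Equiv.Perm X) (hTc : Continuous (⇑T)) (x₀ : X) (f : X →ᵇ ℝ≥0) :
    lamF T x₀ (compT T hTc f) = lamF T x₀ f := by
  obtain ⟨z, hz⟩ := f.continuous.exists_forall_ge' (Classical.arbitrary X)
    (by simp [Filter.cocompact_eq_bot])
  set C : ℝ := (f z : ℝ) with hC
  have hbd : ∀ x, (f x : ℝ) ≤ C := fun x => NNReal.coe_le_coe.2 (hz x)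
  set F : ℕ → ℝ := fun k => (f ((T ^ k) x₀) : ℝ) with hF
  have hFbd : ∀ k, |F k| ≤ C := fun k => by
    rw [hF, abs_of_nonneg (by positivity)]
    exact hbd _
  -- real-valued averages
  have havg : ∀ (g : X →ᵇ ℝ≥0) (M : ℕ),
      ((avgF T x₀ M g : ℝ≥0) : ℝ) = ((M : ℝ) + 1)⁻¹ * ∑ k ∈ Finset.range (M + 1),
        (g ((T ^ k) x₀) : ℝ) := by
    intro g M
    simp only [avgF, NNReal.coe_mul, NNReal.coe_inv, NNReal.coe_sum, NNReal.coe_add,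
      NNReal.coe_natCast, NNReal.coe_one]
  have hcomp_pt : ∀ k, (compT T hTc f) ((T ^ k) x₀) = f ((T ^ (k + 1)) x₀) := by
    intro k
    rw [compT_apply, pow_succ']
    rfl
  have hdiff : ∀ M : ℕ, ((avgF T x₀ M (compT T hTc f) : ℝ≥0) : ℝ)
      - ((avgF T x₀ M f : ℝ≥0) : ℝ) = ((M : ℝ) + 1)⁻¹ * (F (M + 1) - F 0) := by
    intro M
    rw [havg, havg]
    have hshift : ∑ k ∈ Finset.range (M + 1), ((compT T hTc f) ((T ^ k) x₀) : ℝ)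
        = ∑ k ∈ Finset.range (M + 1), F k + F (M + 1) - F 0 := by
      have h1 : ∑ k ∈ Finset.range (M + 2), F k
          = ∑ k ∈ Finset.range (M + 1), F (k + 1) + F 0 := Finset.sum_range_succ' F (M + 1)
      have h2 : ∑ k ∈ Finset.range (M + 2), F k
          = ∑ k ∈ Finset.range (M + 1), F k + F (M + 1) := Finset.sum_range_succ F (M + 1)
      have h3 : ∀ k, ((compT T hTc f) ((T ^ k) x₀) : ℝ) = F (k + 1) := fun k => by
        rw [hcomp_pt k]
      simp only [h3]
      linarith [h1, h2]
    rw [hshift]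
    ring
  have hkey : Filter.Tendsto (fun M : ℕ => ((avgF T x₀ M (compT T hTc f) : ℝ≥0) : ℝ)
      - ((avgF T x₀ M f : ℝ≥0) : ℝ)) Filter.atTop (nhds 0) := by
    apply squeeze_zero_norm (a := fun M : ℕ => (2 * C) * (1 / ((M : ℝ) + 1)))
    · intro M
      rw [hdiff M]
      rw [Real.norm_eq_abs, abs_mul]
      have h1 : |((M : ℝ) + 1)⁻¹| = 1 / ((M : ℝ) + 1) := by
        rw [abs_of_nonneg (by positivity), one_div]
      have h2 : |F (M + 1) - F 0| ≤ 2 * C := by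
        have := hFbd (M + 1)
        have := hFbd 0
        have habs := abs_sub_abs_le_abs_sub (F (M + 1)) (F 0)
        calc |F (M + 1) - F 0| ≤ |F (M + 1)| + |F 0| := abs_sub _ _
          _ ≤ 2 * C := by linarith [hFbd (M + 1), hFbd 0]
      calc |((M : ℝ) + 1)⁻¹| * |F (M + 1) - F 0| = (1 / ((M : ℝ) + 1)) * |F (M + 1) - F 0| := by
            rw [h1]
        _ ≤ (1 / ((M : ℝ) + 1)) * (2 * C) := by
            apply mul_le_mul_of_nonneg_left h2 (by positivity)
        _ = (2 * C) * (1 / ((M : ℝ) + 1)) := by ring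
    · have := tendsto_one_div_add_atTop_nhds_zero_nat.const_mul (2 * C)
      simpa using this
  have h1 : Filter.Tendsto (fun M => ((avgF T x₀ M f : ℝ≥0) : ℝ)) (UF : Filter ℕ)
      (nhds ((lamF T x₀ f : ℝ≥0) : ℝ)) := NNReal.tendsto_coe.2 (lamF_spec T x₀ f)
  have h2 : Filter.Tendsto (fun M => ((avgF T x₀ M (compT T hTc f) : ℝ≥0) : ℝ)) (UF : Filter ℕ)
      (nhds ((lamF T x₀ f : ℝ≥0) : ℝ)) := by
    have := (hkey.mono_left UF_le_atTop).add h1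
    simpa using this
  have h3 : Filter.Tendsto (fun M => ((avgF T x₀ M (compT T hTc f) : ℝ≥0) : ℝ)) (UF : Filter ℕ)
      (nhds ((lamF T x₀ (compT T hTc f) : ℝ≥0) : ℝ)) :=
    NNReal.tendsto_coe.2 (lamF_spec T x₀ _)
  exact NNReal.coe_injective (tendsto_nhds_unique h3 h2)

/-- The invariant positive functional as a linear map. -/
def LamF (T : Equiv.Perm X) (x₀ : X) : (X →ᵇ ℝ≥0) →ₗ[ℝ≥0] ℝ≥0 where
  toFun := lamF T x₀
  map_add' := lamF_add T x₀
  map_smul' := fun c f => by simpa using lamF_smul T x₀ c f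

lemma MeasureTheory.Content.apply_eq_coe_toFun {G : Type} [TopologicalSpace G]
    (μ : Content G) (K : Compacts G) : μ K = ((μ.toFun K : ℝ≥0) : ℝ≥0∞) := rfl

/-- Bounded continuous function from a compactly supported one. -/
def toB (f : CompactlySupportedContinuousMap X ℝ≥0) : X →ᵇ ℝ≥0 :=
  BoundedContinuousFunction.mkOfCompact f.toContinuousMap

@[simp] lemma toB_apply (f : CompactlySupportedContinuousMap X ℝ≥0) (x : X) : toB f x = f x := rfl

/-- Compactly supported function from a bounded continuous one. -/
def toCc (f : X →ᵇ ℝ≥0) : CompactlySupportedContinuousMap X ℝ≥0 :=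
  { toContinuousMap := f.toContinuousMap,
    hasCompactSupport' := isCompact_univ.of_isClosed_subset (isClosed_tsupport _)
      (Set.subset_univ _) }

/-- The invariant functional on compactly supported functions. -/
def LamC (T : Equiv.Perm X) (x₀ : X) : CompactlySupportedContinuousMap X ℝ≥0 →ₗ[ℝ≥0] ℝ≥0 where
  toFun := fun f => LamF T x₀ (toB f)
  map_add' := fun f g => by rw [← map_add]; rfl
  map_smul' := fun c f => by rw [RingHom.id_apply, ← map_smul]; rfl

/-- The invariant Riesz content. -/
def recContent (T : Equiv.Perm X) (x₀ : X) : Content X where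
  toFun := rieszContentAux (LamC T x₀)
  mono' := fun _ _ h => rieszContentAux_mono _ h
  sup_le' := rieszContentAux_sup_le _
  sup_disjoint' := by
    intro K₁ K₂ hd _ _
    refine le_antisymm (rieszContentAux_sup_le _ K₁ K₂) ?_
    refine _root_.le_of_forall_pos_le_add ?_
    intro ε hε
    obtain ⟨f, hf1, hfΛ⟩ := exists_lt_rieszContentAux_add_pos (LamC T x₀) (K₁ ⊔ K₂) hε
    obtain ⟨g, hg0, hg1, hg01⟩ := exists_continuous_zero_one_of_isClosed
      K₁.isCompact.isClosed K₂.isCompact.isClosed hd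
    set p₁ : X →ᵇ ℝ≥0 := BoundedContinuousFunction.mkOfCompact
      ⟨fun x => f x * Real.toNNReal (1 - g x),
        (f.continuous.mul (continuous_real_toNNReal.comp (continuous_const.sub g.continuous)))⟩ with hp₁
    set p₂ : X →ᵇ ℝ≥0 := BoundedContinuousFunction.mkOfCompact
      ⟨fun x => f x * Real.toNNReal (g x),
        (f.continuous.mul (continuous_real_toNNReal.comp g.continuous))⟩ with hp₂
    have hk₁ : ∀ x ∈ K₁, (1 : ℝ≥0) ≤ p₁ x := by
      intro x hx
      have hgx : g x = 0 := hg0 hx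
      have hfx : (1 : ℝ≥0) ≤ f x := hf1 x (Set.mem_union_left _ hx)
      have : p₁ x = f x := by
        simp [hp₁, BoundedContinuousFunction.mkOfCompact_apply, hgx]
      rw [this]; exact hfx
    have hk₂ : ∀ x ∈ K₂, (1 : ℝ≥0) ≤ p₂ x := by
      intro x hx
      have hgx : g x = 1 := hg1 hx
      have hfx : (1 : ℝ≥0) ≤ f x := hf1 x (Set.mem_union_right _ hx)
      have : p₂ x = f x := by
        simp [hp₂, BoundedContinuousFunction.mkOfCompact_apply, hgx]
      rw [this]; exact hfx
    have hsum : p₁ + p₂ = toB f := by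
      ext x
      simp only [BoundedContinuousFunction.coe_add, Pi.add_apply, NNReal.coe_add, NNReal.coe_inj]
      have h01 := hg01 x
      have h1 : Real.toNNReal (1 - g x) + Real.toNNReal (g x) = 1 := by
        rw [← Real.toNNReal_add (by linarith [h01.2]) h01.1]
        norm_num
      have hx : p₁ x + p₂ x = f x := by
        calc p₁ x + p₂ x = f x * (Real.toNNReal (1 - g x) + Real.toNNReal (g x)) := by
              simp [hp₁, hp₂, mul_add]
          _ = f x := by rw [h1, mul_one]
      exact_mod_cast hx
    calc rieszContentAux (LamC T x₀) K₁ + rieszContentAux (LamC T x₀) K₂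
        ≤ (LamF T x₀) p₁ + (LamF T x₀) p₂ :=
          add_le_add (rieszContentAux_le _ (f := toCc p₁) hk₁) (rieszContentAux_le _ (f := toCc p₂) hk₂)
      _ = (LamF T x₀) (toB f) := by rw [← map_add, hsum]
      _ ≤ rieszContentAux (LamC T x₀) (K₁ ⊔ K₂) + ε := hfΛ.le

lemma recContent_univ (T : Equiv.Perm X) (x₀ : X) :
    (recContent T x₀).toFun ⊤ = 1 := by
  refine le_antisymm ?_ ?_
  · have h1 : ∀ x ∈ (⊤ : Compacts X), (1 : ℝ≥0) ≤ (1 : X →ᵇ ℝ≥0) x := by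
      intro x _; simp
    have := rieszContentAux_le (LamC T x₀) (f := toCc 1) h1
    calc (recContent T x₀).toFun ⊤ ≤ (LamF T x₀) 1 := this
      _ = 1 := lamF_one T x₀
  · refine le_csInf (rieszContentAux_image_nonempty (LamC T x₀) ⊤) ?_
    rintro b ⟨f, hf, rfl⟩
    calc (1 : ℝ≥0) = (LamF T x₀) 1 := (lamF_one T x₀).symm
      _ ≤ (LamF T x₀) (toB f) := lamF_mono T x₀ fun x => by
          simpa using hf x (by trivial)

lemma recContent_map (T : Equiv.Perm X) (hTc : Continuous (⇑T)) (hTc' : Continuous (⇑T.symm))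
    (x₀ : X) (K : Compacts X) :
    (recContent T x₀).toFun (K.map (⇑T) hTc) = (recContent T x₀).toFun K := by
  show rieszContentAux (LamC T x₀) (K.map (⇑T) hTc) = rieszContentAux (LamC T x₀) K
  apply le_antisymm
  · refine le_csInf (rieszContentAux_image_nonempty (LamC T x₀) K) ?_
    rintro b ⟨f, hf, rfl⟩
    set g : X →ᵇ ℝ≥0 := BoundedContinuousFunction.mkOfCompact
      ⟨fun x => f (T.symm x), f.continuous.comp hTc'⟩ with hg
    have hg1 : ∀ x ∈ (K.map (⇑T) hTc : Set X), (1 : ℝ≥0) ≤ g x := by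
      intro x hx
      rw [Compacts.coe_map] at hx
      obtain ⟨y, hy, rfl⟩ := hx
      have : g (T y) = f y := by simp [hg]
      rw [this]
      exact hf y hy
    have hgf : compT T hTc g = toB f := by
      ext x
      simp [hg, compT]
    calc rieszContentAux (LamC T x₀) (K.map (⇑T) hTc) ≤ (LamF T x₀) g :=
          rieszContentAux_le _ (f := toCc g) hg1
      _ = (LamC T x₀) f := by
          have := lamF_comp T hTc x₀ g
          rw [hgf] at this
          exact this.symm
  · refine le_csInf (rieszContentAux_image_nonempty (LamC T x₀) (K.map (⇑T) hTc)) ?_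
    rintro b ⟨f, hf, rfl⟩
    have hg1 : ∀ x ∈ (K : Set X), (1 : ℝ≥0) ≤ (compT T hTc (toB f)) x := by
      intro x hx
      rw [compT_apply]
      refine hf (T x) ?_
      show T x ∈ (K.map (⇑T) hTc : Set X)
      rw [Compacts.coe_map]
      exact Set.mem_image_of_mem _ hx
    calc rieszContentAux (LamC T x₀) K ≤ (LamF T x₀) (compT T hTc (toB f)) :=
          rieszContentAux_le _ (f := toCc (compT T hTc (toB f))) hg1
      _ = (LamC T x₀) f := lamF_comp T hTc x₀ (toB f)

lemma recContent_map_symm (T : Equiv.Perm X) (hTc : Continuous (⇑T))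
    (hTc' : Continuous (⇑T.symm)) (x₀ : X) (K : Compacts X) :
    (recContent T x₀).toFun (K.map (⇑T.symm) hTc') = (recContent T x₀).toFun K := by
  have h1 := recContent_map T hTc hTc' x₀ (K.map (⇑T.symm) hTc')
  have h2 : (K.map (⇑T.symm) hTc').map (⇑T) hTc = K := by
    ext1
    simp only [Compacts.coe_map, ← Set.image_comp]
    have : (⇑T ∘ ⇑T.symm) = id := by
      funext x; simp
    rw [this, Set.image_id]
  rw [h2] at h1
  exact h1.symm

end KB

theorem stmt_19 (d : ℕ) (hd : 1 ≤ d) (S : Set ℤ) (hS : IsSetOfDRecurrence d S) :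
    ∀ (X : Type) [MetricSpace X] [CompactSpace X] [Nonempty X]
      (T : Equiv.Perm X), Continuous (⇑T) → Continuous (⇑T.symm) →
      (∀ x : X, Dense (Set.range fun n : ℤ => (T ^ n) x)) →
      ∀ U : Set X, IsOpen U → U.Nonempty →
        ∃ n ∈ S, (⋂ i ∈ Finset.range (d + 1), (⇑(T ^ ((i : ℤ) * n)))⁻¹' U).Nonempty := by
  intro X _ _ _ T hTc hTc' hmin U hUopen hUne
  borelize X
  have hTm : Measurable (⇑T) := hTc.measurable
  have hTm' : Measurable (⇑T.symm) := hTc'.measurable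
  set x₀ : X := Classical.arbitrary X with hx₀
  set κ : Content X := recContent T x₀ with hκdef
  set μ : Measure X := κ.measure with hμdef
  set H : X ≃ₜ X := { toEquiv := T, continuous_toFun := hTc, continuous_invFun := hTc' } with hH
  -- invariance of the content, in `ℝ≥0∞`
  have hκinv : ∀ ⦃K : Compacts X⦄, κ (K.map ⇑H H.continuous) = κ K := by
    intro K
    have := recContent_map T hTc hTc' x₀ K
    simp only [Content.apply_eq_coe_toFun]
    exact_mod_cast this
  have hκinv' : ∀ ⦃K : Compacts X⦄, κ (K.map ⇑H.symm H.symm.continuous) = κ K := by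
    intro K
    have := recContent_map_symm T hTc hTc' x₀ K
    simp only [Content.apply_eq_coe_toFun]
    exact_mod_cast this
  -- probability measure
  haveI hprob : IsProbabilityMeasure μ := by
    constructor
    rw [hμdef, Content.measure_apply _ MeasurableSet.univ]
    have h1 : κ.outerMeasure Set.univ = κ.innerContent ⟨Set.univ, isOpen_univ⟩ :=
      κ.outerMeasure_of_isOpen Set.univ isOpen_univ
    have h2 : κ.innerContent ⟨Set.univ, isOpen_univ⟩ = κ ⟨Set.univ, isCompact_univ⟩ :=
      κ.innerContent_of_isCompact isCompact_univ isOpen_univ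
    rw [h1, h2]
    have h3 : κ.toFun ⟨Set.univ, isCompact_univ⟩ = 1 := recContent_univ T x₀
    rw [Content.apply_eq_coe_toFun, h3]
    rfl
  have hmes : ∀ (s : Set X), MeasurableSet s → μ (⇑T ⁻¹' s) = μ s := by
    intro s hs
    rw [hμdef, Content.measure_apply _ (hTm hs), Content.measure_apply _ hs]
    exact κ.outerMeasure_preimage H hκinv s
  have hmes' : ∀ (s : Set X), MeasurableSet s → μ (⇑T.symm ⁻¹' s) = μ s := by
    intro s hs
    rw [hμdef, Content.measure_apply _ (hTm' hs), Content.measure_apply _ hs]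
    exact κ.outerMeasure_preimage H.symm hκinv' s
  have mpT : MeasurePreserving (⇑T) μ μ :=
    ⟨hTm, Measure.ext fun s hs => by rw [Measure.map_apply hTm hs, hmes s hs]⟩
  have mpT' : MeasurePreserving (⇑T.symm) μ μ :=
    ⟨hTm', Measure.ext fun s hs => by rw [Measure.map_apply hTm' hs, hmes' s hs]⟩
  -- measure-preservation of all integer powers
  have mpZ : ∀ n : ℤ, MeasurePreserving (⇑(T ^ n)) μ μ := by
    intro n
    cases n with
    | ofNat m =>
        have h1 : (T : Equiv.Perm X) ^ (Int.ofNat m) = T ^ m := by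
          rw [Int.ofNat_eq_natCast, zpow_natCast]
        rw [h1, ← Equiv.Perm.iterate_eq_pow]
        exact mpT.iterate m
    | negSucc m =>
        have h1 : (T : Equiv.Perm X) ^ (Int.negSucc m) = (T⁻¹ : Equiv.Perm X) ^ (m + 1) := by
          rw [zpow_negSucc, inv_pow]
        have h2 : ⇑(T⁻¹ : Equiv.Perm X) = ⇑T.symm := rfl
        rw [h1, ← Equiv.Perm.iterate_eq_pow]
        have := mpT'.iterate (m + 1)
        rwa [← h2] at this
  -- positivity of μ on U
  have hcover : (⋃ n : ℤ, (⇑(T ^ n)) ⁻¹' U) = Set.univ := by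
    apply Set.eq_univ_of_forall
    intro x
    obtain ⟨y, ⟨n, rfl⟩, hyU⟩ := (hmin x).exists_mem_open hUopen hUne
    exact Set.mem_iUnion.2 ⟨n, hyU⟩
  have hUpos : 0 < μ U := by
    rcases eq_or_ne (μ U) 0 with h0 | h0
    · exfalso
      have huniv : μ Set.univ = 0 := by
        rw [← hcover]
        refine measure_iUnion_null fun n => ?_
        rw [(mpZ n).measure_preimage hUopen.measurableSet.nullMeasurableSet, h0]
      rw [measure_univ] at huniv
      exact one_ne_zero huniv
    · exact h0.bot_lt
  obtain ⟨n, hnS, hpos⟩ := hS X μ T hTm hTm' mpT mpT' U hUopen.measurableSet hUpos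
  refine ⟨n, hnS, ?_⟩
  by_contra hempty
  rw [Set.not_nonempty_iff_eq_empty] at hempty
  rw [hempty, measure_empty] at hpos
  exact lt_irrefl 0 hpos
end
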